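/- arXiv:1212.5705 — 3 statements merged into one kernel-verified Lean document; each statement's English description precedes it below -/
import Mathlib

section
/- Let M[P,Q] be a lattice path matroid presented as the transversal matroid on {1,...,m+r} with presentation N_i = [s_i, t_i]. If there exists an integer x and index j with s_j < x < t_j and s_{j+1} < x+1 < t_{j+1}, then P(M[P,Q]) admits a nontrivial hyperplane split into two matroid polytopes P(M_1) and P(M_2), where M_1 and M_2 are again lattice path matroids, B(M_1) = {B basis of M : |B ∩ {1,...,x}| ≤ j} and B(M_2) = {B basis of M : |B ∩ {x+1,...,m+r}| ≤ r - j}. -/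
open Finset

/-- An interval presentation `N_k = [s k, t k]`, `k = 1, …, r`, of a lattice path matroid on
the ground set `{1, …, m+r}`: the intervals are nonempty, contained in `{1, …, m+r}`, and
both endpoint sequences are strictly increasing. -/
def IsIntervalPres (m r : ℕ) (s t : ℕ → ℕ) : Prop :=
  (∀ k, 1 ≤ k → k ≤ r → 1 ≤ s k ∧ t k ≤ m + r ∧ s k ≤ t k) ∧
  (∀ k, 1 ≤ k → k < r → s k < s (k + 1) ∧ t k < t (k + 1))

/-- The bases of the transversal matroid on `{1, …, m+r}` with presentation
`(N_k = [s k, t k] : 1 ≤ k ≤ r)`: the partial transversals of size `r` (= the rank). -/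
def transBases (m r : ℕ) (s t : ℕ → ℕ) : Set (Finset ℕ) :=
  {B | B ⊆ Finset.Icc 1 (m + r) ∧ B.card = r ∧
    ∃ f : ℕ → ℕ, Set.InjOn f ↑B ∧
      ∀ b ∈ B, f b ∈ Finset.Icc 1 r ∧ s (f b) ≤ b ∧ b ≤ t (f b)}

/-- The polytope of a family `𝔅` of subsets of `{1,…,m+r}`: the convex hull of the
indicator vectors. -/
def basesPoly (𝔅 : Set (Finset ℕ)) : Set (ℕ → ℝ) :=
  convexHull ℝ {v | ∃ B ∈ 𝔅, v = fun i => if i ∈ B then (1 : ℝ) else 0}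

namespace Stmt15

variable {m r : ℕ} {s t : ℕ → ℕ}

/-- monotonicity of the endpoint sequences on `[1,r]` -/
lemma pres_mono (hst : IsIntervalPres m r s t) {k₁ k₂ : ℕ} (h1 : 1 ≤ k₁) (h12 : k₁ ≤ k₂)
    (h2r : k₂ ≤ r) : s k₁ ≤ s k₂ ∧ t k₁ ≤ t k₂ := by
  induction k₂ with
  | zero => omega
  | succ n ih =>
    rcases Nat.eq_or_lt_of_le h12 with h | h
    · subst h; exact ⟨le_rfl, le_rfl⟩
    · have hn : k₁ ≤ n := by omega
      have h1n : 1 ≤ n := by omega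
      have := hst.2 n h1n (by omega)
      have := ih hn (by omega)
      omega

lemma pres_strict (hst : IsIntervalPres m r s t) {k₁ k₂ : ℕ} (h1 : 1 ≤ k₁) (h12 : k₁ < k₂)
    (h2r : k₂ ≤ r) : s k₁ < s k₂ ∧ t k₁ < t k₂ := by
  have h := hst.2 k₁ h1 (by omega)
  rcases Nat.eq_or_lt_of_le (Nat.succ_le_of_lt h12) with hh | hh
  · rw [← hh]; exact h
  · have := pres_mono hst (k₁ := k₁ + 1) (by omega) (by omega) h2r
    omega

/-- indicator vector -/
noncomputable def ind (B : Finset ℕ) : ℕ → ℝ := fun i => if i ∈ B then 1 else 0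

/-- the sorted characterization of membership -/
def goodB (r : ℕ) (s t : ℕ → ℕ) (B : Finset ℕ) : Prop :=
  ∃ h : B.card = r, ∀ i : Fin r,
    s (i.1 + 1) ≤ B.orderEmbOfFin h i ∧ B.orderEmbOfFin h i ≤ t (i.1 + 1)

lemma filter_card_eq {B : Finset ℕ} (h : B.card = r) (p : ℕ → Prop) [DecidablePred p] :
    (B.filter p).card = (univ.filter fun i : Fin r => p (B.orderEmbOfFin h i)).card := by
  have : B.filter p = (univ.filter fun i : Fin r => p (B.orderEmbOfFin h i)).image
      (B.orderEmbOfFin h) := by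
    ext a
    simp only [mem_filter, mem_image, mem_univ, true_and]
    constructor
    · rintro ⟨haB, hpa⟩
      have : a ∈ Set.range (B.orderEmbOfFin h) := by
        rw [range_orderEmbOfFin]; exact haB
      obtain ⟨i, rfl⟩ := this
      exact ⟨i, hpa, rfl⟩
    · rintro ⟨i, hpi, rfl⟩
      exact ⟨orderEmbOfFin_mem B h i, hpi⟩
  rw [this, card_image_of_injective _ (B.orderEmbOfFin h).injective]

lemma mem_transBases_iff (hst : IsIntervalPres m r s t) {B : Finset ℕ} :
    B ∈ transBases m r s t ↔ goodB r s t B := by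
  constructor
  · rintro ⟨hsub, hcard, f, hinj, hf⟩
    refine ⟨hcard, fun i => ?_⟩
    set e := B.orderEmbOfFin hcard with he
    constructor
    · by_contra hlt
      push_neg at hlt
      -- the i+1 elements e 0, ..., e i are < s (i+1), mapped injectively into Icc 1 i
      set A : Finset ℕ := (Finset.Iic i).image e with hA
      have hAB : A ⊆ B := by
        intro a ha
        obtain ⟨k, _, rfl⟩ := mem_image.1 ha
        exact orderEmbOfFin_mem B hcard k
      have hcardA : A.card = i.1 + 1 := by
        rw [hA, card_image_of_injective _ e.injective, Fin.card_Iic]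
      have hmaps : ∀ a ∈ A, f a ∈ Finset.Icc 1 i.1 := by
        intro a ha
        obtain ⟨k, hk, rfl⟩ := mem_image.1 ha
        have hkB : e k ∈ B := orderEmbOfFin_mem B hcard k
        have h1 := hf _ hkB
        have hek : e k ≤ e i := e.monotone (mem_Iic.1 hk)
        have hlt' : e k < s (i.1 + 1) := lt_of_le_of_lt hek hlt
        simp only [mem_Icc] at h1 ⊢
        refine ⟨h1.1.1, ?_⟩
        by_contra hc
        push_neg at hc
        have : s (i.1 + 1) ≤ s (f (e k)) :=
          (pres_mono hst (by omega) (by omega) h1.1.2).1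
        omega
      have hinj' : Set.InjOn f A := hinj.mono (by exact_mod_cast hAB)
      have := Finset.card_le_card_of_injOn f hmaps hinj'
      rw [hcardA, Nat.card_Icc] at this
      omega
    · by_contra hlt
      push_neg at hlt
      set A : Finset ℕ := (Finset.Ici i).image e with hA
      have hAB : A ⊆ B := by
        intro a ha
        obtain ⟨k, _, rfl⟩ := mem_image.1 ha
        exact orderEmbOfFin_mem B hcard k
      have hcardA : A.card = r - i.1 := by
        rw [hA, card_image_of_injective _ e.injective, Fin.card_Ici]
      have hmaps : ∀ a ∈ A, f a ∈ Finset.Icc (i.1 + 2) r := by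
        intro a ha
        obtain ⟨k, hk, rfl⟩ := mem_image.1 ha
        have hkB : e k ∈ B := orderEmbOfFin_mem B hcard k
        have h1 := hf _ hkB
        have hek : e i ≤ e k := e.monotone (mem_Ici.1 hk)
        have hlt' : t (i.1 + 1) < e k := lt_of_lt_of_le hlt hek
        simp only [mem_Icc] at h1 ⊢
        refine ⟨?_, h1.1.2⟩
        by_contra hc
        push_neg at hc
        have : t (f (e k)) ≤ t (i.1 + 1) :=
          (pres_mono hst (by omega) (by omega) (by omega)).2
        omega
      have hinj' : Set.InjOn f A := hinj.mono (by exact_mod_cast hAB)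
      have := Finset.card_le_card_of_injOn f hmaps hinj'
      rw [hcardA, Nat.card_Icc] at this
      have := i.2
      omega
  · rintro ⟨hcard, hbd⟩
    set e := B.orderEmbOfFin hcard with he
    have hmem : ∀ b ∈ B, ∃ i : Fin r, e i = b := by
      intro b hb
      have : b ∈ Set.range e := by rw [he, range_orderEmbOfFin]; exact hb
      exact this
    refine ⟨?_, hcard, fun b => (B.filter (· ≤ b)).card, ?_, ?_⟩
    · intro b hb
      obtain ⟨i, rfl⟩ := hmem b hb
      have h1 := (hbd i).1
      have h2 := (hbd i).2
      have hs := (hst.1 (i.1 + 1) (by omega) (by omega))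
      simp only [mem_Icc]
      omega
    · intro b1 hb1 b2 hb2 hfe
      simp only [Finset.mem_coe] at hb1 hb2
      obtain ⟨i1, rfl⟩ := hmem b1 hb1
      obtain ⟨i2, rfl⟩ := hmem b2 hb2
      have key : ∀ i : Fin r, (B.filter (· ≤ e i)).card = i.1 + 1 := by
        intro i
        rw [filter_card_eq hcard]
        have : (univ.filter fun k : Fin r => e k ≤ e i) = Finset.Iic i := by
          ext k
          simp [e.le_iff_le]
        rw [this, Fin.card_Iic]
      dsimp only at hfe
      rw [key, key] at hfe
      have : i1 = i2 := Fin.ext (by omega)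
      rw [this]
    · intro b hb
      obtain ⟨i, rfl⟩ := hmem b hb
      have key : (B.filter (· ≤ e i)).card = i.1 + 1 := by
        rw [filter_card_eq hcard]
        have : (univ.filter fun k : Fin r => e k ≤ e i) = Finset.Iic i := by
          ext k
          simp [e.le_iff_le]
        rw [this, Fin.card_Iic]
      dsimp only
      rw [key]
      simp only [mem_Icc]
      have := i.2
      exact ⟨⟨by omega, by omega⟩, (hbd i).1, (hbd i).2⟩


/-- bridge: counting positions = countP -/
lemma card_filter_univ_get (l : List ℕ) (p : ℕ → Prop) [DecidablePred p] :
    (univ.filter fun i : Fin l.length => p (l.get i)).card = Multiset.countP p ↑l := by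
  induction l with
  | nil => simp
  | cons a l ih =>
    rw [Finset.card_filter]
    have hlen : (a :: l).length = l.length + 1 := rfl
    rw [show (∑ i : Fin (a :: l).length, if p ((a :: l).get i) then 1 else 0)
        = ∑ i : Fin (l.length + 1), if p ((a :: l).get (Fin.cast hlen.symm i)) then 1 else 0
      from (Fin.sum_congr' _ hlen.symm).symm]
    rw [Fin.sum_univ_succ]
    have h0 : (a :: l).get (Fin.cast hlen.symm 0) = a := rfl
    have hsucc : ∀ i : Fin l.length,
        (a :: l).get (Fin.cast hlen.symm i.succ) = l.get i := fun i => rfl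
    simp only [h0, hsucc]
    rw [← Finset.card_filter, ih, ← Multiset.cons_coe, Multiset.countP_cons]
    rcases Classical.em (p a) with h | h <;> simp [h, add_comm]

lemma finset_filter_card_eq_countP (B : Finset ℕ) (p : ℕ → Prop) [DecidablePred p] :
    (B.filter p).card = Multiset.countP p B.1 := by
  rw [Finset.card, Finset.filter_val, Multiset.countP_eq_card_filter]

/-- positions of a sorted list satisfying a downward closed predicate are an initial
segment -/
lemma sorted_index_iff (l : List ℕ) (hl : l.Pairwise (· ≤ ·)) (p : ℕ → Prop) [DecidablePred p]
    (hp : ∀ a b : ℕ, b ≤ a → p a → p b) (i : Fin l.length) :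
    p (l.get i) ↔ i.1 < (univ.filter fun q : Fin l.length => p (l.get q)).card := by
  constructor
  · intro h
    have hsub : Finset.Iic i ⊆ univ.filter fun q : Fin l.length => p (l.get q) := by
      intro q hq
      rw [mem_filter]
      exact ⟨mem_univ _, hp _ _ (hl.rel_get_of_le (mem_Iic.1 hq)) h⟩
    have := Finset.card_le_card hsub
    rw [Fin.card_Iic] at this
    omega
  · intro h
    by_contra hc
    have hsub : (univ.filter fun q : Fin l.length => p (l.get q)) ⊆ Finset.Iio i := by
      intro q hq
      rw [mem_filter] at hq
      rw [mem_Iio]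
      by_contra hq'
      push_neg at hq'
      exact hc (hp _ _ (hl.rel_get_of_le hq') hq.2)
    have := Finset.card_le_card hsub
    rw [Fin.card_Iio] at this
    omega

lemma card_filter_image {α β : Type*} [DecidableEq β] (s : Finset α) (g : α → β)
    (hg : Function.Injective g) (p : β → Prop) [DecidablePred p] :
    ((s.image g).filter p).card = (s.filter fun a => p (g a)).card := by
  rw [← Finset.card_image_of_injective (s.filter fun a => p (g a)) hg]
  congr 1
  ext b
  simp only [mem_filter, mem_image]
  constructor
  · rintro ⟨⟨a, ha, rfl⟩, hpb⟩
    exact ⟨a, ⟨ha, hpb⟩, rfl⟩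
  · rintro ⟨a, ⟨ha, hpa⟩, rfl⟩
    exact ⟨⟨a, ha, rfl⟩, hpa⟩

/-- splitting a count over `Fin (2*n)` into even and odd positions -/
lemma card_split (n : ℕ) (P : Fin (2*n) → Prop) [DecidablePred P] :
    (univ.filter P).card =
      (univ.filter fun k : Fin n => P ⟨2*k.1, by have := k.2; omega⟩).card
      + (univ.filter fun k : Fin n => P ⟨2*k.1+1, by have := k.2; omega⟩).card := by
  classical
  set gE : Fin n → Fin (2*n) := fun k => ⟨2*k.1, by have := k.2; omega⟩ with hgE
  set gO : Fin n → Fin (2*n) := fun k => ⟨2*k.1+1, by have := k.2; omega⟩ with hgO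
  have hEinj : Function.Injective gE := by
    intro a b hab
    have : 2*a.1 = 2*b.1 := congrArg Fin.val hab
    exact Fin.ext (by omega)
  have hOinj : Function.Injective gO := by
    intro a b hab
    have : 2*a.1+1 = 2*b.1+1 := congrArg Fin.val hab
    exact Fin.ext (by omega)
  have huniv : (univ : Finset (Fin (2*n))) = univ.image gE ∪ univ.image gO := by
    ext i
    simp only [mem_univ, true_iff, mem_union, mem_image]
    rcases Nat.even_or_odd i.1 with ⟨c, hc⟩ | ⟨c, hc⟩
    · exact Or.inl ⟨⟨c, by have := i.2; omega⟩, trivial, Fin.ext (by simp [hgE]; omega)⟩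
    · exact Or.inr ⟨⟨c, by have := i.2; omega⟩, trivial, Fin.ext (by simp [hgO]; omega)⟩
  have hdisj : Disjoint (univ.image gE) (univ.image gO) := by
    rw [Finset.disjoint_left]
    rintro i hiE hiO
    obtain ⟨a, _, rfl⟩ := mem_image.1 hiE
    obtain ⟨b, _, hb⟩ := mem_image.1 hiO
    have : 2*b.1+1 = 2*a.1 := congrArg Fin.val hb
    omega
  rw [huniv, Finset.filter_union,
    Finset.card_union_of_disjoint (Finset.disjoint_filter_filter hdisj),
    card_filter_image _ _ hEinj, card_filter_image _ _ hOinj]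


lemma card_split' {n N : ℕ} (hN : N = 2*n) (P : Fin N → Prop) [DecidablePred P] :
    (univ.filter P).card =
      (univ.filter fun k : Fin n => P ⟨2*k.1, by have := k.2; omega⟩).card
      + (univ.filter fun k : Fin n => P ⟨2*k.1+1, by have := k.2; omega⟩).card := by
  subst hN
  exact card_split n P

lemma card_val_lt (r c : ℕ) : (univ.filter fun k : Fin r => k.1 < c).card = min c r := by
  rcases lt_or_ge c r with h | h
  · have : (univ.filter fun k : Fin r => k.1 < c) = Finset.Iio ⟨c, h⟩ := by
      ext k
      simp [Fin.lt_def]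
    rw [this, Fin.card_Iio]
    show c = min c r
    omega
  · have : (univ.filter fun k : Fin r => k.1 < c) = univ := by
      ext k
      simp only [mem_filter, mem_univ, true_and, iff_true]
      have := k.2
      omega
    rw [this, card_univ, Fintype.card_fin]
    omega

lemma ind_eq_card (B : Finset ℕ) (v : ℕ) : ind B v = ((B.filter (· = v)).card : ℝ) := by
  unfold ind
  by_cases h : v ∈ B <;> simp [Finset.filter_eq', h]

lemma merge (hst : IsIntervalPres m r s t) {B B' : Finset ℕ}
    (hB : goodB r s t B) (hB' : goodB r s t B') :
    ∃ C C' : Finset ℕ, goodB r s t C ∧ goodB r s t C' ∧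
      ind B + ind B' = ind C + ind C' ∧
      (∀ x, (C.filter (· ≤ x)).card
          = ((B.filter (· ≤ x)).card + (B'.filter (· ≤ x)).card + 1) / 2) ∧
      (∀ x, (C'.filter (· ≤ x)).card
          = ((B.filter (· ≤ x)).card + (B'.filter (· ≤ x)).card) / 2) := by
  classical
  obtain ⟨hcB, hbB⟩ := hB
  obtain ⟨hcB', hbB'⟩ := hB'
  set eB := B.orderEmbOfFin hcB with heB
  set eB' := B'.orderEmbOfFin hcB' with heB'
  set LL : List ℕ := Multiset.sort (B.1 + B'.1) (· ≤ ·) with hLL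
  have hsort : LL.Pairwise (· ≤ ·) := Multiset.pairwise_sort _ _
  have hcoe : (↑LL : Multiset ℕ) = B.1 + B'.1 := Multiset.sort_eq _ _
  have hlen : LL.length = 2*r := by
    rw [hLL, Multiset.length_sort, Multiset.card_add]
    have h1 : Multiset.card B.1 = r := hcB
    have h2 : Multiset.card B'.1 = r := hcB'
    omega
  have hcnt : ∀ (p : ℕ → Prop) [DecidablePred p],
      (univ.filter fun i : Fin LL.length => p (LL.get i)).card
        = (B.filter p).card + (B'.filter p).card := by
    intro p _
    rw [card_filter_univ_get, hcoe, Multiset.countP_add,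
      finset_filter_card_eq_countP, finset_filter_card_eq_countP]
  have hmono : ∀ (i q : Fin LL.length), i ≤ q → LL.get i ≤ LL.get q := fun i q h =>
    hsort.rel_get_of_le h
  have hstrict : ∀ (i q : Fin LL.length), i.1 + 2 ≤ q.1 → LL.get i < LL.get q := by
    intro i q h
    rcases lt_or_ge (LL.get i) (LL.get q) with hlt | hge
    · exact hlt
    · exfalso
      have hle : LL.get i ≤ LL.get q := hmono i q (by omega)
      have heq : LL.get q = LL.get i := le_antisymm hge hle
      set c := LL.get i with hc
      have hsub : Finset.Icc i q ⊆ univ.filter fun w : Fin LL.length => LL.get w = c := by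
        intro w hw
        rw [mem_Icc] at hw
        rw [mem_filter]
        exact ⟨mem_univ _, le_antisymm (heq ▸ hmono w q hw.2) (hmono i w hw.1)⟩
      have hcard := Finset.card_le_card hsub
      rw [Fin.card_Icc] at hcard
      have h2 := hcnt (· = c)
      have hB1 : (B.filter (· = c)).card ≤ 1 := by
        have : B.filter (· = c) ⊆ {c} := fun a ha => by
          rw [Finset.mem_singleton]
          exact (Finset.mem_filter.1 ha).2
        simpa using Finset.card_le_card this
      have hB2 : (B'.filter (· = c)).card ≤ 1 := by
        have : B'.filter (· = c) ⊆ {c} := fun a ha => by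
          rw [Finset.mem_singleton]
          exact (Finset.mem_filter.1 ha).2
        simpa using Finset.card_le_card this
      omega
  -- index characterization for downward-closed predicates
  have hidx : ∀ (x : ℕ) (i : Fin LL.length),
      LL.get i ≤ x ↔ i.1 < (B.filter (· ≤ x)).card + (B'.filter (· ≤ x)).card := by
    intro x i
    rw [← hcnt (· ≤ x)]
    exact sorted_index_iff LL hsort (· ≤ x) (fun a b hba ha => le_trans hba ha) i
  have hidx' : ∀ (c : ℕ) (i : Fin LL.length),
      LL.get i < c ↔ i.1 < (B.filter (· < c)).card + (B'.filter (· < c)).card := by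
    intro c i
    rw [← hcnt (· < c)]
    exact sorted_index_iff LL hsort (· < c) (fun a b hba ha => lt_of_le_of_lt hba ha) i
  -- the even/odd subsequences
  have h2k : ∀ k : Fin r, 2*k.1 < LL.length := fun k => by have := k.2; omega
  have h2k1 : ∀ k : Fin r, 2*k.1+1 < LL.length := fun k => by have := k.2; omega
  set g : Fin r → ℕ := fun k => LL.get ⟨2*k.1, h2k k⟩ with hg
  set g' : Fin r → ℕ := fun k => LL.get ⟨2*k.1+1, h2k1 k⟩ with hg'
  have hgmono : StrictMono g := by
    intro a b hab
    exact hstrict _ _ (by simp only []; omega)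
  have hg'mono : StrictMono g' := by
    intro a b hab
    exact hstrict _ _ (by simp only []; omega)
  have hgg' : ∀ k : Fin r, g k ≤ g' k := fun k =>
    hmono _ _ (by simp only [Fin.le_def]; omega)
  -- bounds
  have hBlt : ∀ k : Fin r, (B.filter (· < s (k.1+1))).card ≤ k.1 := by
    intro k
    rw [filter_card_eq hcB]
    have hsub : (univ.filter fun i : Fin r => eB i < s (k.1+1)) ⊆ Finset.Iio k := by
      intro i hi
      rw [mem_filter] at hi
      rw [mem_Iio]
      by_contra hik
      push_neg at hik
      have h1 := (hbB i).1
      have : s (k.1+1) ≤ s (i.1+1) :=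
        (pres_mono hst (by omega) (by simp only [Fin.le_def] at hik; omega) (by have := i.2; omega)).1
      omega
    have := Finset.card_le_card hsub
    rw [Fin.card_Iio] at this
    exact this
  have hB'lt : ∀ k : Fin r, (B'.filter (· < s (k.1+1))).card ≤ k.1 := by
    intro k
    rw [filter_card_eq hcB']
    have hsub : (univ.filter fun i : Fin r => eB' i < s (k.1+1)) ⊆ Finset.Iio k := by
      intro i hi
      rw [mem_filter] at hi
      rw [mem_Iio]
      by_contra hik
      push_neg at hik
      have h1 := (hbB' i).1
      have : s (k.1+1) ≤ s (i.1+1) :=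
        (pres_mono hst (by omega) (by simp only [Fin.le_def] at hik; omega) (by have := i.2; omega)).1
      omega
    have := Finset.card_le_card hsub
    rw [Fin.card_Iio] at this
    exact this
  have hBle : ∀ k : Fin r, k.1+1 ≤ (B.filter (· ≤ t (k.1+1))).card := by
    intro k
    rw [filter_card_eq hcB]
    have hsub : Finset.Iic k ⊆ (univ.filter fun i : Fin r => eB i ≤ t (k.1+1)) := by
      intro i hi
      rw [mem_Iic] at hi
      rw [mem_filter]
      refine ⟨mem_univ _, ?_⟩
      have h1 := (hbB i).2
      have : t (i.1+1) ≤ t (k.1+1) :=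
        (pres_mono hst (by omega) (by simp only [Fin.le_def] at hi; omega) (by have := k.2; omega)).2
      omega
    have := Finset.card_le_card hsub
    rw [Fin.card_Iic] at this
    exact this
  have hB'le : ∀ k : Fin r, k.1+1 ≤ (B'.filter (· ≤ t (k.1+1))).card := by
    intro k
    rw [filter_card_eq hcB']
    have hsub : Finset.Iic k ⊆ (univ.filter fun i : Fin r => eB' i ≤ t (k.1+1)) := by
      intro i hi
      rw [mem_Iic] at hi
      rw [mem_filter]
      refine ⟨mem_univ _, ?_⟩
      have h1 := (hbB' i).2
      have : t (i.1+1) ≤ t (k.1+1) :=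
        (pres_mono hst (by omega) (by simp only [Fin.le_def] at hi; omega) (by have := k.2; omega)).2
      omega
    have := Finset.card_le_card hsub
    rw [Fin.card_Iic] at this
    exact this
  have hglb : ∀ k : Fin r, s (k.1+1) ≤ g k := by
    intro k
    by_contra hc
    push_neg at hc
    have := (hidx' (s (k.1+1)) ⟨2*k.1, h2k k⟩).1 hc
    have h1 := hBlt k
    have h2 := hB'lt k
    simp only [] at this
    omega
  have hg'ub : ∀ k : Fin r, g' k ≤ t (k.1+1) := by
    intro k
    by_contra hc
    push_neg at hc
    have hnot : ¬ (LL.get ⟨2*k.1+1, h2k1 k⟩ ≤ t (k.1+1)) := by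
      simp only [hg'] at hc
      omega
    rw [hidx (t (k.1+1)) ⟨2*k.1+1, h2k1 k⟩] at hnot
    push_neg at hnot
    have h1 := hBle k
    have h2 := hB'le k
    simp only [] at hnot
    omega
  have hgub : ∀ k : Fin r, g k ≤ t (k.1+1) := fun k => le_trans (hgg' k) (hg'ub k)
  have hg'lb : ∀ k : Fin r, s (k.1+1) ≤ g' k := fun k => le_trans (hglb k) (hgg' k)
  -- the finsets
  set C : Finset ℕ := univ.image g with hC
  set C' : Finset ℕ := univ.image g' with hC'
  have hCc : C.card = r := by
    rw [hC, card_image_of_injective _ hgmono.injective, card_univ, Fintype.card_fin]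
  have hC'c : C'.card = r := by
    rw [hC', card_image_of_injective _ hg'mono.injective, card_univ, Fintype.card_fin]
  have hCemb : ∀ i : Fin r, C.orderEmbOfFin hCc i = g i := by
    have := orderEmbOfFin_unique' hCc
      (f := OrderEmbedding.ofStrictMono g hgmono)
      (fun k => Finset.mem_image_of_mem g (mem_univ k))
    intro i
    rw [← this]
    rfl
  have hC'emb : ∀ i : Fin r, C'.orderEmbOfFin hC'c i = g' i := by
    have := orderEmbOfFin_unique' hC'c
      (f := OrderEmbedding.ofStrictMono g' hg'mono)
      (fun k => Finset.mem_image_of_mem g' (mem_univ k))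
    intro i
    rw [← this]
    rfl
  have hgoodC : goodB r s t C := ⟨hCc, fun i => by rw [hCemb]; exact ⟨hglb i, hgub i⟩⟩
  have hgoodC' : goodB r s t C' := ⟨hC'c, fun i => by rw [hC'emb]; exact ⟨hg'lb i, hg'ub i⟩⟩
  -- indicator identity
  have hindeq : ind B + ind B' = ind C + ind C' := by
    funext v
    have hv := hcnt (· = v)
    rw [card_split' hlen] at hv
    have hCv : (C.filter (· = v)).card = (univ.filter fun k : Fin r => g k = v).card :=
      card_filter_image _ _ hgmono.injective _
    have hC'v : (C'.filter (· = v)).card = (univ.filter fun k : Fin r => g' k = v).card :=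
      card_filter_image _ _ hg'mono.injective _
    have hveq : (C.filter (· = v)).card + (C'.filter (· = v)).card
        = (B.filter (· = v)).card + (B'.filter (· = v)).card := by
      rw [hCv, hC'v, ← hv]
    simp only [Pi.add_apply]
    rw [ind_eq_card B v, ind_eq_card B' v, ind_eq_card C v, ind_eq_card C' v]
    exact_mod_cast congrArg (fun n : ℕ => (n : ℝ)) hveq.symm
  -- filter counts
  have hNle : ∀ x, (B.filter (· ≤ x)).card + (B'.filter (· ≤ x)).card ≤ 2*r := by
    intro x
    have h1 : (B.filter (· ≤ x)).card ≤ r := hcB ▸ Finset.card_filter_le _ _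
    have h2 : (B'.filter (· ≤ x)).card ≤ r := hcB' ▸ Finset.card_filter_le _ _
    omega
  have hCcount : ∀ x, (C.filter (· ≤ x)).card
      = ((B.filter (· ≤ x)).card + (B'.filter (· ≤ x)).card + 1) / 2 := by
    intro x
    set N := (B.filter (· ≤ x)).card + (B'.filter (· ≤ x)).card with hN
    rw [hC, card_filter_image _ _ hgmono.injective]
    have : (univ.filter fun k : Fin r => g k ≤ x)
        = univ.filter fun k : Fin r => k.1 < (N+1)/2 := by
      ext k
      simp only [mem_filter, mem_univ, true_and]
      rw [hg]
      rw [hidx x ⟨2*k.1, h2k k⟩]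
      simp only []
      omega
    rw [this, card_val_lt]
    have := hNle x
    omega
  have hC'count : ∀ x, (C'.filter (· ≤ x)).card
      = ((B.filter (· ≤ x)).card + (B'.filter (· ≤ x)).card) / 2 := by
    intro x
    set N := (B.filter (· ≤ x)).card + (B'.filter (· ≤ x)).card with hN
    rw [hC', card_filter_image _ _ hg'mono.injective]
    have : (univ.filter fun k : Fin r => g' k ≤ x)
        = univ.filter fun k : Fin r => k.1 < N/2 := by
      ext k
      simp only [mem_filter, mem_univ, true_and]
      rw [hg']
      rw [hidx x ⟨2*k.1+1, h2k1 k⟩]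
      simp only []
      omega
    rw [this, card_val_lt]
    have := hNle x
    omega
  exact ⟨C, C', hgoodC, hgoodC', hindeq, hCcount, hC'count⟩

set_option maxHeartbeats 2000000 in
lemma key {n : ℕ} (𝔅 : Set (Finset ℕ)) (hsub : ∀ B ∈ 𝔅, B ⊆ Finset.Icc 1 n)
    (g : Finset ℕ → ℕ) (j : ℕ)
    (L : (ℕ → ℝ) →ₗ[ℝ] ℝ) (hL : ∀ B ∈ 𝔅, L (ind B) = g B)
    (hex : ∀ B ∈ 𝔅, ∀ B' ∈ 𝔅, j < g B → g B' < j →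
      ∃ C ∈ 𝔅, ∃ C' ∈ 𝔅, ind B + ind B' = ind C + ind C' ∧
        max ((g C : ℝ) - j) 0 + max ((g C' : ℝ) - j) 0 + 1
          ≤ max ((g B : ℝ) - j) 0 + max ((g B' : ℝ) - j) 0)
    {p : ℕ → ℝ} (hp : p ∈ convexHull ℝ (ind '' 𝔅)) (hpj : L p ≤ j) :
    p ∈ convexHull ℝ (ind '' {B ∈ 𝔅 | g B ≤ j}) := by
  classical
  set V : Finset (Finset ℕ) := (Finset.Icc 1 n).powerset.filter (· ∈ 𝔅) with hV
  have hVmem : ∀ B, B ∈ V ↔ B ∈ 𝔅 := by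
    intro B
    simp only [hV, mem_filter, Finset.mem_powerset]
    exact ⟨fun h => h.2, fun h => ⟨hsub B h, h⟩⟩
  set φ : Finset ℕ → ℝ := fun D => max ((g D : ℝ) - j) 0 with hφ
  have hφ0 : ∀ D, 0 ≤ φ D := fun D => le_max_right _ _
  set T : Set ((Finset ℕ) → ℝ) := {w | (∀ D, 0 ≤ w D) ∧ (∀ D ∉ V, w D = 0) ∧
    (∑ D ∈ V, w D) = 1 ∧ (∑ D ∈ V, w D • ind D) = p} with hT
  -- T is nonempty
  have hTne : T.Nonempty := by
    rw [_root_.convexHull_eq] at hp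
    obtain ⟨ι, tt, wt, z, hw0, hw1, hz, hcm⟩ := hp
    have hzF : ∀ i ∈ tt, ∃ B ∈ 𝔅, z i = ind B := by
      intro i hi
      obtain ⟨B, hB, hBz⟩ := hz i hi
      exact ⟨B, hB, hBz.symm⟩
    set F : ι → Finset ℕ := fun i =>
      if h : ∃ B ∈ 𝔅, z i = ind B then h.choose else ∅ with hF
    have hFspec : ∀ i ∈ tt, F i ∈ 𝔅 ∧ z i = ind (F i) := by
      intro i hi
      have h := hzF i hi
      simp only [hF, dif_pos h]
      exact ⟨h.choose_spec.1, h.choose_spec.2⟩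
    have hFV : ∀ i ∈ tt, F i ∈ V := fun i hi => (hVmem _).2 (hFspec i hi).1
    refine ⟨fun D => ∑ i ∈ tt.filter (fun i => F i = D), wt i, ?_, ?_, ?_, ?_⟩
    · intro D
      exact Finset.sum_nonneg fun i hi => hw0 i (Finset.mem_filter.1 hi).1
    · intro D hD
      apply Finset.sum_eq_zero
      intro i hi
      rw [Finset.mem_filter] at hi
      exact absurd (hi.2 ▸ hFV i hi.1) hD
    · rw [Finset.sum_fiberwise_of_maps_to hFV]
      exact hw1
    · have hp' : (∑ i ∈ tt, wt i • z i) = p := by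
        rw [← Finset.centerMass_eq_of_sum_1 tt z hw1]
        exact hcm
      rw [← hp', ← Finset.sum_fiberwise_of_maps_to hFV (fun i => wt i • z i)]
      apply Finset.sum_congr rfl
      intro D _
      rw [Finset.sum_smul]
      apply Finset.sum_congr rfl
      intro i hi
      rw [Finset.mem_filter] at hi
      rw [(hFspec i hi.1).2, hi.2]
  -- T is compact
  have hTclosed : IsClosed T := by
    have h1 : IsClosed {w : Finset ℕ → ℝ | ∀ D, 0 ≤ w D} := by
      have : {w : Finset ℕ → ℝ | ∀ D, 0 ≤ w D} = ⋂ D, {w | 0 ≤ w D} := by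
        ext w; simp [Set.mem_iInter]
      rw [this]
      exact isClosed_iInter fun D => isClosed_le continuous_const (continuous_apply D)
    have h2 : IsClosed {w : Finset ℕ → ℝ | ∀ D ∉ V, w D = 0} := by
      have : {w : Finset ℕ → ℝ | ∀ D ∉ V, w D = 0}
          = ⋂ (D : Finset ℕ) (_ : D ∉ V), {w | w D = 0} := by
        ext w; simp [Set.mem_iInter]
      rw [this]
      exact isClosed_iInter fun D => isClosed_iInter fun _ =>
        isClosed_eq (continuous_apply D) continuous_const
    have h3 : IsClosed {w : Finset ℕ → ℝ | (∑ D ∈ V, w D) = 1} :=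
      isClosed_eq (by continuity) continuous_const
    have h4 : IsClosed {w : Finset ℕ → ℝ | (∑ D ∈ V, w D • ind D) = p} := by
      have hc : Continuous fun w : Finset ℕ → ℝ => ∑ D ∈ V, w D • ind D := by
        apply continuous_finset_sum
        intro D _
        exact (continuous_apply D).smul continuous_const
      exact isClosed_eq hc continuous_const
    have hTeq : T = (({w : Finset ℕ → ℝ | ∀ D, 0 ≤ w D} ∩ {w | ∀ D ∉ V, w D = 0})
        ∩ {w | (∑ D ∈ V, w D) = 1}) ∩ {w | (∑ D ∈ V, w D • ind D) = p} := by
      ext w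
      simp only [hT, Set.mem_setOf_eq, Set.mem_inter_iff]
      tauto
    rw [hTeq]
    exact ((h1.inter h2).inter h3).inter h4
  have hTsubbox : T ⊆ Set.pi Set.univ (fun _ : Finset ℕ => Set.Icc (0:ℝ) 1) := by
    rintro w ⟨hw0, hwV, hw1, -⟩ D -
    refine ⟨hw0 D, ?_⟩
    by_cases hD : D ∈ V
    · calc w D ≤ ∑ E ∈ V, w E := Finset.single_le_sum (fun E _ => hw0 E) hD
        _ = 1 := hw1
    · rw [hwV D hD]; exact zero_le_one
  have hTcompact : IsCompact T :=
    (isCompact_univ_pi fun _ => isCompact_Icc).of_isClosed_subset hTclosed hTsubbox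
  set Φ : (Finset ℕ → ℝ) → ℝ := fun w => ∑ D ∈ V, w D * φ D with hΦdef
  have hΦcont : Continuous Φ := by
    apply continuous_finset_sum
    intro D _
    exact (continuous_apply D).mul continuous_const
  obtain ⟨w, hwT, hmin⟩ := hTcompact.exists_isMinOn hTne hΦcont.continuousOn
  obtain ⟨hw0, hwV, hw1, hwp⟩ := hwT
  -- the minimum of Φ is 0
  have hΦw : Φ w = 0 := by
    by_contra hne
    have hΦnn : 0 ≤ Φ w := Finset.sum_nonneg fun D _ => mul_nonneg (hw0 D) (hφ0 D)
    have hΦpos : 0 < Φ w := lt_of_le_of_ne hΦnn (Ne.symm hne)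
    -- find B with positive weight above level j
    have hexB : ∃ B ∈ V, 0 < w B * φ B := by
      by_contra hc
      push_neg at hc
      have : Φ w ≤ 0 := Finset.sum_nonpos fun D hD => hc D hD
      linarith
    obtain ⟨B, hBV, hBpos⟩ := hexB
    have hwBpos : 0 < w B := by
      rcases lt_or_ge 0 (w B) with h | h
      · exact h
      · exfalso; nlinarith [hφ0 B]
    have hφBpos : 0 < φ B := by
      rcases lt_or_ge 0 (φ B) with h | h
      · exact h
      · exfalso; nlinarith
    have hgB : j < g B := by
      by_contra hc
      push_neg at hc
      have : ((g B : ℝ) - j) ≤ 0 := by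
        have : (g B : ℝ) ≤ j := by exact_mod_cast hc
        linarith
      have : φ B = 0 := max_eq_right this
      linarith
    -- L p = ∑ w D * g D
    have hLp : L p = ∑ D ∈ V, w D * g D := by
      rw [← hwp, map_sum]
      apply Finset.sum_congr rfl
      intro D hD
      rw [map_smul, hL D ((hVmem D).1 hD)]
      simp [mul_comm]
    -- find B' with positive weight below level j
    have hexB' : ∃ B' ∈ V, 0 < w B' ∧ g B' < j := by
      by_contra hc
      push_neg at hc
      have hge : ∀ D ∈ V, 0 ≤ w D * ((g D : ℝ) - j) := by
        intro D hD
        rcases eq_or_lt_of_le (hw0 D) with h | h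
        · rw [← h]; ring_nf; exact le_refl 0
        · have : (j : ℝ) ≤ g D := by exact_mod_cast hc D hD h
          have : 0 ≤ (g D : ℝ) - j := by linarith
          positivity
      have hgt : 0 < ∑ D ∈ V, w D * ((g D : ℝ) - j) := by
        apply Finset.sum_pos' hge
        refine ⟨B, hBV, ?_⟩
        have : 0 < (g B : ℝ) - j := by
          have : (j : ℝ) < g B := by exact_mod_cast hgB
          linarith
        positivity
      have hsplit : ∑ D ∈ V, w D * ((g D : ℝ) - j)
          = (∑ D ∈ V, w D * g D) - j := by
        have h1 : ∑ D ∈ V, w D * ((g D : ℝ) - j)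
            = (∑ D ∈ V, w D * g D) - ∑ D ∈ V, w D * (j:ℝ) := by
          rw [← Finset.sum_sub_distrib]
          apply Finset.sum_congr rfl
          intro D _
          ring
        rw [h1, ← Finset.sum_mul, hw1, one_mul]
      rw [hsplit, ← hLp] at hgt
      linarith
    obtain ⟨B', hB'V, hwB'pos, hgB'⟩ := hexB'
    obtain ⟨C, hC𝔅, C', hC'𝔅, heq, hdec⟩ :=
      hex B ((hVmem B).1 hBV) B' ((hVmem B').1 hB'V) hgB hgB'
    have hCV : C ∈ V := (hVmem C).2 hC𝔅
    have hC'V : C' ∈ V := (hVmem C').2 hC'𝔅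
    have hBB' : B ≠ B' := by
      intro h
      rw [h] at hgB
      omega
    set μ : ℝ := min (w B) (w B') with hμdef
    have hμpos : 0 < μ := lt_min hwBpos hwB'pos
    set δ : Finset ℕ → ℝ := fun D =>
      (if D = C then 1 else 0) + (if D = C' then 1 else 0)
      - (if D = B then 1 else 0) - (if D = B' then 1 else 0) with hδdef
    set w' : Finset ℕ → ℝ := fun D => w D + μ * δ D with hw'def
    have hsumif : ∀ E ∈ V, (∑ D ∈ V, (if D = E then (1:ℝ) else 0)) = 1 := by
      intro E hE
      rw [Finset.sum_ite_eq' V E (fun _ => (1:ℝ))]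
      simp [hE]
    have hw'T : w' ∈ T := by
      refine ⟨?_, ?_, ?_, ?_⟩
      · intro D
        simp only [hw'def]
        rcases eq_or_ne D B with rfl | hDB
        · have hδ : δ D ≥ -1 := by
            simp only [hδdef, if_pos rfl, if_neg hBB']
            split <;> split <;> norm_num
          have hμB : μ ≤ w D := min_le_left _ _
          nlinarith
        · rcases eq_or_ne D B' with rfl | hDB'
          · have hδ : δ D ≥ -1 := by
              simp only [hδdef, if_neg hDB, if_pos rfl]
              split <;> split <;> norm_num
            have hμB : μ ≤ w D := min_le_right _ _
            nlinarith
          · have hδ : δ D ≥ 0 := by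
              simp only [hδdef, if_neg hDB, if_neg hDB']
              split <;> split <;> norm_num
            nlinarith [hw0 D]
      · intro D hD
        have hDB : D ≠ B := fun h => hD (h ▸ hBV)
        have hDB' : D ≠ B' := fun h => hD (h ▸ hB'V)
        have hDC : D ≠ C := fun h => hD (h ▸ hCV)
        have hDC' : D ≠ C' := fun h => hD (h ▸ hC'V)
        simp only [hw'def, hδdef, if_neg hDB, if_neg hDB', if_neg hDC, if_neg hDC',
          hwV D hD]
        ring
      · simp only [hw'def, hδdef]
        rw [Finset.sum_add_distrib, hw1, ← Finset.mul_sum]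
        rw [Finset.sum_sub_distrib, Finset.sum_sub_distrib, Finset.sum_add_distrib,
          hsumif C hCV, hsumif C' hC'V, hsumif B hBV, hsumif B' hB'V]
        ring
      · funext v
        have hwpv : ∑ D ∈ V, w D * ind D v = p v := by
          have h := congrFun hwp v
          rw [Finset.sum_apply] at h
          simpa [smul_eq_mul] using h
        have heqv : ind B v + ind B' v = ind C v + ind C' v := by
          have h := congrFun heq v
          simpa using h
        have hsum4 : ∀ E ∈ V, ∑ D ∈ V, (if D = E then (1:ℝ) else 0) * ind D v
            = ind E v := by
          intro E hE
          have hc : ∀ D ∈ V, (if D = E then (1:ℝ) else 0) * ind D v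
              = if D = E then ind D v else 0 := by
            intro D _
            split <;> simp
          rw [Finset.sum_congr rfl hc, Finset.sum_ite_eq' V E (fun D => ind D v)]
          simp [hE]
        have hLHS : (∑ D ∈ V, w' D • ind D) v = ∑ D ∈ V, w' D * ind D v := by
          rw [Finset.sum_apply]
          simp [smul_eq_mul]
        rw [hLHS]
        have hexpand : ∀ D ∈ V, w' D * ind D v
            = w D * ind D v + μ * ((if D = C then (1:ℝ) else 0) * ind D v)
              + μ * ((if D = C' then (1:ℝ) else 0) * ind D v)
              - μ * ((if D = B then (1:ℝ) else 0) * ind D v)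
              - μ * ((if D = B' then (1:ℝ) else 0) * ind D v) := by
          intro D _
          simp only [hw'def, hδdef]
          ring
        rw [Finset.sum_congr rfl hexpand, Finset.sum_sub_distrib, Finset.sum_sub_distrib,
          Finset.sum_add_distrib, Finset.sum_add_distrib, ← Finset.mul_sum,
          ← Finset.mul_sum, ← Finset.mul_sum, ← Finset.mul_sum, hsum4 C hCV,
          hsum4 C' hC'V, hsum4 B hBV, hsum4 B' hB'V, hwpv]
        have h2 : μ * (ind B v + ind B' v) = μ * (ind C v + ind C' v) := by rw [heqv]
        ring_nf at h2 ⊢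
        linarith
    -- Φ strictly decreases, contradiction with minimality
    have hΦw' : Φ w' ≤ Φ w - μ := by
      have hsum4 : ∀ E ∈ V, ∑ D ∈ V, (if D = E then (1:ℝ) else 0) * φ D = φ E := by
        intro E hE
        have hc : ∀ D ∈ V, (if D = E then (1:ℝ) else 0) * φ D
            = if D = E then φ D else 0 := by
          intro D _
          split <;> simp
        rw [Finset.sum_congr rfl hc, Finset.sum_ite_eq' V E (fun D => φ D)]
        simp [hE]
      have hexpand : ∀ D ∈ V, w' D * φ D
          = w D * φ D + μ * ((if D = C then (1:ℝ) else 0) * φ D)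
            + μ * ((if D = C' then (1:ℝ) else 0) * φ D)
            - μ * ((if D = B then (1:ℝ) else 0) * φ D)
            - μ * ((if D = B' then (1:ℝ) else 0) * φ D) := by
        intro D _
        simp only [hw'def, hδdef]
        ring
      have hΦeq : Φ w' = Φ w + μ * (φ C + φ C' - φ B - φ B') := by
        simp only [hΦdef]
        rw [Finset.sum_congr rfl hexpand, Finset.sum_sub_distrib, Finset.sum_sub_distrib,
          Finset.sum_add_distrib, Finset.sum_add_distrib, ← Finset.mul_sum,
          ← Finset.mul_sum, ← Finset.mul_sum, ← Finset.mul_sum, hsum4 C hCV,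
          hsum4 C' hC'V, hsum4 B hBV, hsum4 B' hB'V]
        ring
      rw [hΦeq]
      have hφdec : φ C + φ C' - φ B - φ B' ≤ -1 := by
        simp only [hφ]
        linarith [hdec]
      nlinarith
    have hge := hmin hw'T
    simp only [Set.mem_setOf_eq] at hge
    have : Φ w ≤ Φ w' := hge
    linarith
  -- conclude : restrict to the support
  have hterm0 : ∀ D ∈ V, w D * φ D = 0 :=
    (Finset.sum_eq_zero_iff_of_nonneg
      (fun D _ => mul_nonneg (hw0 D) (hφ0 D))).1 hΦw
  set V' : Finset (Finset ℕ) := V.filter (fun D => w D ≠ 0) with hV'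
  have hsum1' : ∑ D ∈ V', w D = 1 := by
    rw [hV', Finset.sum_filter_ne_zero]
    exact hw1
  have hsump' : ∑ D ∈ V', w D • ind D = p := by
    rw [← hwp, hV']
    apply Finset.sum_filter_of_ne
    intro D _ hne h0
    rw [h0] at hne
    simp at hne
  have hmem' : ∀ D ∈ V', ind D ∈ ind '' {B ∈ 𝔅 | g B ≤ j} := by
    intro D hD
    rw [hV', Finset.mem_filter] at hD
    obtain ⟨hDV, hDne⟩ := hD
    have hD𝔅 : D ∈ 𝔅 := (hVmem D).1 hDV
    have hφD : φ D = 0 := by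
      have h := hterm0 D hDV
      rcases mul_eq_zero.1 h with h | h
      · exact absurd h hDne
      · exact h
    have hgD : g D ≤ j := by
      by_contra hc
      push_neg at hc
      have h1 : (0:ℝ) < (g D : ℝ) - j := by
        have : (j:ℝ) < g D := by exact_mod_cast hc
        linarith
      have h2 : φ D = (g D : ℝ) - j := max_eq_left h1.le
      rw [h2] at hφD
      linarith
    exact ⟨D, ⟨hD𝔅, hgD⟩, rfl⟩
  rw [← hsump']
  have hcm : ∑ D ∈ V', w D • ind D = V'.centerMass w ind :=
    (Finset.centerMass_eq_of_sum_1 V' ind hsum1').symm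
  rw [hcm]
  exact Finset.centerMass_mem_convexHull V'
    (fun D _ => hw0 D) (by rw [hsum1']; norm_num) hmem'

/-- the linear functional summing coordinates in `[a,b]` -/
noncomputable def Lfun (a b : ℕ) : (ℕ → ℝ) →ₗ[ℝ] ℝ where
  toFun v := ∑ i ∈ Finset.Icc a b, v i
  map_add' u v := by simp [Finset.sum_add_distrib]
  map_smul' c v := by simp [Finset.mul_sum]

lemma Lfun_apply (a b : ℕ) (v : ℕ → ℝ) : Lfun a b v = ∑ i ∈ Finset.Icc a b, v i := rfl

lemma Lfun_ind_le {n x : ℕ} {B : Finset ℕ} (hB : B ⊆ Finset.Icc 1 n) :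
    Lfun 1 x (ind B) = ((B.filter (· ≤ x)).card : ℝ) := by
  rw [Lfun_apply]
  unfold ind
  rw [Finset.sum_boole]
  congr 1
  congr 1
  ext i
  simp only [Finset.mem_filter, Finset.mem_Icc]
  constructor
  · rintro ⟨⟨h1, h2⟩, h3⟩
    exact ⟨h3, h2⟩
  · rintro ⟨h3, h2⟩
    have := hB h3
    rw [Finset.mem_Icc] at this
    exact ⟨⟨this.1, h2⟩, h3⟩

lemma Lfun_ind_ge {n x : ℕ} {B : Finset ℕ} (hB : B ⊆ Finset.Icc 1 n) :
    Lfun (x+1) n (ind B) = ((B.filter (fun b => x + 1 ≤ b)).card : ℝ) := by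
  rw [Lfun_apply]
  unfold ind
  rw [Finset.sum_boole]
  congr 1
  congr 1
  ext i
  simp only [Finset.mem_filter, Finset.mem_Icc]
  constructor
  · rintro ⟨⟨h1, h2⟩, h3⟩
    exact ⟨h3, h1⟩
  · rintro ⟨h3, h1⟩
    have := hB h3
    rw [Finset.mem_Icc] at this
    exact ⟨⟨h1, this.2⟩, h3⟩

lemma filter_partition {x r : ℕ} {B : Finset ℕ} (hc : B.card = r) :
    (B.filter (· ≤ x)).card + (B.filter (fun b => x + 1 ≤ b)).card = r := by
  classical
  rw [← hc]
  have : B.filter (fun b => x + 1 ≤ b) = B.filter (fun b => ¬ (b ≤ x)) := by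
    apply Finset.filter_congr
    intro b _
    simp only [not_le]
    omega
  rw [this]
  exact Finset.card_filter_add_card_filter_not _

/-- the convex hull of indicator vectors lies in the halfspace `L ≤ c` -/
lemma hull_le {𝔖 : Set (Finset ℕ)} (L : (ℕ → ℝ) →ₗ[ℝ] ℝ) (c : ℝ)
    (h : ∀ B ∈ 𝔖, L (ind B) ≤ c) {p : ℕ → ℝ}
    (hp : p ∈ convexHull ℝ (ind '' 𝔖)) : L p ≤ c := by
  have hcvx : Convex ℝ {v : ℕ → ℝ | L v ≤ c} :=
    convex_halfSpace_le (LinearMap.isLinear L) c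
  have hsub : ind '' 𝔖 ⊆ {v | L v ≤ c} := by
    rintro v ⟨B, hB, rfl⟩
    exact h B hB
  exact convexHull_min hsub hcvx hp

lemma hull_eq_affine {𝔖 : Set (Finset ℕ)} (L : (ℕ → ℝ) →ₗ[ℝ] ℝ) (c : ℝ)
    (h : ∀ B ∈ 𝔖, L (ind B) = c) {p : ℕ → ℝ}
    (hp : p ∈ convexHull ℝ (ind '' 𝔖)) : L p = c := by
  have h1 := hull_le L c (fun B hB => (h B hB).le) hp
  have hcvx : Convex ℝ {v : ℕ → ℝ | c ≤ L v} :=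
    convex_halfSpace_ge (LinearMap.isLinear L) c
  have hsub : ind '' 𝔖 ⊆ {v | c ≤ L v} := by
    rintro v ⟨B, hB, rfl⟩
    exact (h B hB).ge
  have h2 := convexHull_min hsub hcvx hp
  exact le_antisymm h1 h2

/-- points of the hull lying on a supporting hyperplane are hulls of the vertices there -/
lemma face {𝔖 : Set (Finset ℕ)} (L : (ℕ → ℝ) →ₗ[ℝ] ℝ) (c : ℝ)
    (hle : ∀ B ∈ 𝔖, L (ind B) ≤ c) {p : ℕ → ℝ}
    (hp : p ∈ convexHull ℝ (ind '' 𝔖)) (hpc : L p = c) :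
    p ∈ convexHull ℝ (ind '' {B ∈ 𝔖 | L (ind B) = c}) := by
  classical
  rw [_root_.convexHull_eq] at hp
  obtain ⟨ι, tt, w, z, hw0, hw1, hz, hcm⟩ := hp
  have hps : p = ∑ i ∈ tt, w i • z i := by
    rw [← hcm, Finset.centerMass_eq_of_sum_1 _ z hw1]
  have hzle : ∀ i ∈ tt, L (z i) ≤ c := by
    intro i hi
    obtain ⟨B, hB, hBz⟩ := hz i hi
    rw [← hBz]
    exact hle B hB
  have hLsum : ∑ i ∈ tt, w i * L (z i) = c := by
    have : L p = ∑ i ∈ tt, w i * L (z i) := by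
      rw [hps, map_sum]
      apply Finset.sum_congr rfl
      intro i _
      rw [map_smul]
      simp [mul_comm]
    rw [← this, hpc]
  have hzero : ∑ i ∈ tt, w i * (c - L (z i)) = 0 := by
    have hexp : ∑ i ∈ tt, w i * (c - L (z i))
        = (∑ i ∈ tt, w i * c) - ∑ i ∈ tt, w i * L (z i) := by
      rw [← Finset.sum_sub_distrib]
      apply Finset.sum_congr rfl
      intro i _
      ring
    rw [hexp, ← Finset.sum_mul, hw1, one_mul, hLsum, sub_self]
  have hall : ∀ i ∈ tt, w i * (c - L (z i)) = 0 :=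
    (Finset.sum_eq_zero_iff_of_nonneg
      (fun i hi => mul_nonneg (hw0 i hi) (by linarith [hzle i hi]))).1 hzero
  set tt' := tt.filter (fun i => w i ≠ 0) with htt'
  have hsum1' : ∑ i ∈ tt', w i = 1 := by
    rw [htt', Finset.sum_filter_ne_zero]
    exact hw1
  have hsump' : ∑ i ∈ tt', w i • z i = p := by
    rw [hps, htt']
    apply Finset.sum_filter_of_ne
    intro i _ hne h0
    rw [h0] at hne
    simp at hne
  have hmem' : ∀ i ∈ tt', z i ∈ ind '' {B ∈ 𝔖 | L (ind B) = c} := by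
    intro i hi
    rw [htt', Finset.mem_filter] at hi
    obtain ⟨hit, hine⟩ := hi
    obtain ⟨B, hB, hBz⟩ := hz i hit
    have hci : L (z i) = c := by
      have h := hall i hit
      rcases mul_eq_zero.1 h with h | h
      · exact absurd h hine
      · linarith
    refine ⟨B, ⟨hB, ?_⟩, hBz⟩
    rw [hBz]
    exact hci
  rw [← hsump']
  rw [(Finset.centerMass_eq_of_sum_1 tt' z hsum1').symm]
  exact Finset.centerMass_mem_convexHull tt'
    (fun i hi => hw0 i (Finset.mem_filter.1 hi).1) (by rw [hsum1']; norm_num) hmem'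

/-- a strictly monotone map grows at least linearly -/
lemma strictMono_fin_le {r : ℕ} {u : Fin r → ℕ} (hu : StrictMono u) :
    ∀ (n : ℕ) (k i : Fin r), i.1 = k.1 + n → u k + n ≤ u i := by
  intro n
  induction n with
  | zero =>
    intro k i h
    have : i = k := Fin.ext (by omega)
    rw [this]
    omega
  | succ n ih =>
    intro k i h
    have hi' : k.1 + n < r := by have := i.2; omega
    have h1 := ih k ⟨k.1 + n, hi'⟩ rfl
    have h2 : u ⟨k.1 + n, hi'⟩ < u i := hu (by simp [Fin.lt_def]; omega)
    omega

lemma castmax (c j : ℕ) : max ((c:ℝ) - (j:ℝ)) 0 = ((max c j - j : ℕ) : ℝ) := by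
  rcases le_total c j with h | h
  · rw [max_eq_right (by exact_mod_cast sub_nonpos.2 (by exact_mod_cast h : (c:ℝ) ≤ j))]
    rw [max_eq_right h]
    simp
  · rw [max_eq_left (by
      have : (j:ℝ) ≤ c := by exact_mod_cast h
      linarith)]
    rw [max_eq_left h]
    push_cast [h]
    ring

/-- construction of a basis with a prescribed number of elements `≤ x` -/
lemma exB (hst : IsIntervalPres m r s t) {x c : ℕ} (hcr : c ≤ r)
    (hc1 : c = 0 ∨ s c ≤ x) (hc2 : c = r ∨ x < t (c+1)) :
    ∃ B : Finset ℕ, goodB r s t B ∧ (B.filter (· ≤ x)).card = c := by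
  classical
  set u : Fin r → ℕ := fun k => if k.1 + 1 ≤ c then s (k.1+1) else t (k.1+1) with hu
  have humono : StrictMono u := by
    intro k k' hkk'
    rw [Fin.lt_def] at hkk'
    have hk'r : k'.1 + 1 ≤ r := k'.2
    simp only [hu]
    rcases le_or_gt (k.1+1) c with h1 | h1 <;> rcases le_or_gt (k'.1+1) c with h2 | h2
    · rw [if_pos h1, if_pos h2]
      exact (pres_strict hst (by omega) (by omega) (by omega)).1
    · rw [if_pos h1, if_neg (by omega)]
      have hc0 : 1 ≤ c := by omega
      have hcr' : c < r := by omega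
      have hsx : s c ≤ x := hc1.resolve_left (by omega)
      have hxt : x < t (c+1) := hc2.resolve_left (by omega)
      have hs1 : s (k.1+1) ≤ s c := (pres_mono hst (by omega) h1 (by omega)).1
      have ht1 : t (c+1) ≤ t (k'.1+1) := (pres_mono hst (by omega) (by omega) (by omega)).2
      omega
    · omega
    · rw [if_neg (by omega), if_neg (by omega)]
      exact (pres_strict hst (by omega) (by omega) (by omega)).2
  set B : Finset ℕ := univ.image u with hB
  have hBc : B.card = r := by
    rw [hB, card_image_of_injective _ humono.injective, card_univ, Fintype.card_fin]
  have hBemb : ∀ i : Fin r, B.orderEmbOfFin hBc i = u i := by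
    have := orderEmbOfFin_unique' hBc
      (f := OrderEmbedding.ofStrictMono u humono)
      (fun k => Finset.mem_image_of_mem u (mem_univ k))
    intro i
    rw [← this]
    rfl
  have hubd : ∀ k : Fin r, s (k.1+1) ≤ u k ∧ u k ≤ t (k.1+1) := by
    intro k
    have hk : k.1 + 1 ≤ r := k.2
    have := hst.1 (k.1+1) (by omega) (by omega)
    simp only [hu]
    split <;> omega
  have hux : ∀ k : Fin r, u k ≤ x ↔ k.1 + 1 ≤ c := by
    intro k
    have hk : k.1 + 1 ≤ r := k.2
    constructor
    · intro h
      by_contra hc'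
      push_neg at hc'
      have hcr' : c < r := by omega
      have hxt : x < t (c+1) := hc2.resolve_left (by omega)
      have : t (c+1) ≤ t (k.1+1) := (pres_mono hst (by omega) (by omega) (by omega)).2
      simp only [hu, if_neg (by omega : ¬ (k.1+1 ≤ c))] at h
      omega
    · intro h
      have hc0 : 1 ≤ c := by omega
      have hsx : s c ≤ x := hc1.resolve_left (by omega)
      have : s (k.1+1) ≤ s c := (pres_mono hst (by omega) h (by omega)).1
      simp only [hu, if_pos h]
      omega
  refine ⟨B, ⟨hBc, fun i => by rw [hBemb]; exact hubd i⟩, ?_⟩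
  rw [filter_card_eq hBc]
  have : (univ.filter fun i : Fin r => B.orderEmbOfFin hBc i ≤ x)
      = univ.filter fun i : Fin r => i.1 < c := by
    apply Finset.filter_congr
    intro i _
    rw [hBemb i]
    rw [hux i]
    constructor <;> (intro h; omega)
  rw [this, card_val_lt]
  omega

/-- the split applied to the lower halfspace -/
lemma split_le (hst : IsIntervalPres m r s t) (x j : ℕ)
    {p : ℕ → ℝ} (hp : p ∈ convexHull ℝ (ind '' transBases m r s t))
    (hpj : Lfun 1 x p ≤ (j:ℝ)) :
    p ∈ convexHull ℝ
      (ind '' {B ∈ transBases m r s t | (B.filter (· ≤ x)).card ≤ j}) := by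
  apply key (n := m+r) (transBases m r s t) (fun B hB => hB.1)
    (fun B => (B.filter (· ≤ x)).card) j (Lfun 1 x)
    (fun B hB => Lfun_ind_le hB.1) ?_ hp hpj
  intro B hB B' hB' hgB hgB'
  obtain ⟨C, C', hC, hC', heq, hc1, hc2⟩ :=
    merge hst ((mem_transBases_iff hst).1 hB) ((mem_transBases_iff hst).1 hB')
  refine ⟨C, (mem_transBases_iff hst).2 hC, C', (mem_transBases_iff hst).2 hC', heq, ?_⟩
  rw [castmax, castmax, castmax, castmax, hc1 x, hc2 x]
  have hineq : (max (((B.filter (· ≤ x)).card + (B'.filter (· ≤ x)).card + 1)/2) j - j)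
      + (max (((B.filter (· ≤ x)).card + (B'.filter (· ≤ x)).card)/2) j - j) + 1
      ≤ (max ((B.filter (· ≤ x)).card) j - j) + (max ((B'.filter (· ≤ x)).card) j - j) := by
    omega
  exact_mod_cast hineq

/-- the split applied to the upper halfspace -/
lemma split_ge (hst : IsIntervalPres m r s t) (x j : ℕ) (hjr : j ≤ r)
    {p : ℕ → ℝ} (hp : p ∈ convexHull ℝ (ind '' transBases m r s t))
    (hpj : Lfun (x+1) (m+r) p ≤ ((r - j : ℕ):ℝ)) :
    p ∈ convexHull ℝ
      (ind '' {B ∈ transBases m r s t |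
        (B.filter (fun b => x + 1 ≤ b)).card ≤ r - j}) := by
  apply key (n := m+r) (transBases m r s t) (fun B hB => hB.1)
    (fun B => (B.filter (fun b => x + 1 ≤ b)).card) (r - j) (Lfun (x+1) (m+r))
    (fun B hB => Lfun_ind_ge hB.1) ?_ hp hpj
  intro B hB B' hB' hgB hgB'
  obtain ⟨C, C', hC, hC', heq, hc1, hc2⟩ :=
    merge hst ((mem_transBases_iff hst).1 hB') ((mem_transBases_iff hst).1 hB)
  refine ⟨C, (mem_transBases_iff hst).2 hC, C', (mem_transBases_iff hst).2 hC', ?_, ?_⟩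
  · rw [add_comm] at heq
    exact heq
  · have hparB := filter_partition (x := x) hB.2.1
    have hparB' := filter_partition (x := x) hB'.2.1
    have hparC := filter_partition (x := x) hC.1
    have hparC' := filter_partition (x := x) hC'.1
    rw [castmax, castmax, castmax, castmax]
    have h1 := hc1 x
    have h2 := hc2 x
    have hineq : (max ((C.filter (fun b => x + 1 ≤ b)).card) (r-j) - (r-j))
        + (max ((C'.filter (fun b => x + 1 ≤ b)).card) (r-j) - (r-j)) + 1
        ≤ (max ((B.filter (fun b => x + 1 ≤ b)).card) (r-j) - (r-j))
          + (max ((B'.filter (fun b => x + 1 ≤ b)).card) (r-j) - (r-j)) := by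
      omega
    exact_mod_cast hineq

lemma pres_gap (hst : IsIntervalPres m r s t) {k l : ℕ} (h1 : 1 ≤ k) (hkl : k ≤ l)
    (hlr : l ≤ r) : s k + (l - k) ≤ s l ∧ t k + (l - k) ≤ t l := by
  induction l with
  | zero => omega
  | succ n ih =>
    rcases Nat.eq_or_lt_of_le hkl with h | h
    · rw [← h]
      omega
    · have hn : k ≤ n := by omega
      have := ih hn (by omega)
      have := hst.2 n (by omega) (by omega)
      omega

lemma pres1 (hst : IsIntervalPres m r s t) {x j : ℕ} (hj1 : 1 ≤ j) (hj2 : j + 1 ≤ r)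
    (h1 : s j < x) (h3 : s (j+1) < x+1) (h4 : x+1 < t (j+1)) :
    IsIntervalPres m r (fun k => if k ≤ j then s k else max (s k) (x + (k - j))) t ∧
    {B ∈ transBases m r s t | (B.filter (· ≤ x)).card ≤ j}
      = transBases m r (fun k => if k ≤ j then s k else max (s k) (x + (k - j))) t := by
  classical
  set s₁ : ℕ → ℕ := fun k => if k ≤ j then s k else max (s k) (x + (k - j)) with hs₁
  have h_t : ∀ k, j+1 ≤ k → k ≤ r → x + (k - j) + 1 ≤ t k := by
    intro k
    induction k with
    | zero => omega
    | succ n ih =>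
      intro hn1 hnr
      rcases Nat.eq_or_lt_of_le hn1 with h | h
      · rw [← h]
        omega
      · have := ih (by omega) (by omega)
        have := hst.2 n (by omega) (by omega)
        omega
  have hst1 : IsIntervalPres m r s₁ t := by
    constructor
    · intro k hk1 hkr
      have h0 := hst.1 k hk1 hkr
      simp only [hs₁]
      split
      · exact h0
      · have hk : j + 1 ≤ k := by omega
        have := h_t k hk hkr
        omega
    · intro k hk1 hkr
      have h0 := hst.2 k hk1 hkr
      simp only [hs₁]
      rcases lt_trichotomy k j with h | h | h
      · rw [if_pos (by omega), if_pos (by omega)]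
        exact h0
      · subst h
        rw [if_pos (by omega), if_neg (by omega)]
        have : k + 1 - k = 1 := by omega
        rw [this]
        constructor
        · omega
        · exact h0.2
      · rw [if_neg (by omega), if_neg (by omega)]
        constructor
        · omega
        · exact h0.2
  refine ⟨hst1, ?_⟩
  ext B
  simp only [Set.mem_setOf_eq]
  constructor
  · rintro ⟨hBmem, hBf⟩
    obtain ⟨hcard, hbd⟩ := (mem_transBases_iff hst).1 hBmem
    set e := B.orderEmbOfFin hcard with he
    have hjr : j < r := by omega
    have hej : x + 1 ≤ e ⟨j, hjr⟩ := by
      by_contra hc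
      push_neg at hc
      have hsub : Finset.Iic (⟨j, hjr⟩ : Fin r)
          ⊆ univ.filter fun i : Fin r => e i ≤ x := by
        intro i hi
        rw [mem_Iic] at hi
        rw [mem_filter]
        exact ⟨mem_univ _, le_trans (e.monotone hi) (by omega)⟩
      have hcc := Finset.card_le_card hsub
      rw [Fin.card_Iic] at hcc
      rw [filter_card_eq hcard] at hBf
      rw [← he] at hBf
      have hv : ((⟨j, hjr⟩ : Fin r) : ℕ) = j := rfl
      omega
    apply (mem_transBases_iff hst1).2
    refine ⟨hcard, fun i => ?_⟩
    refine ⟨?_, (hbd i).2⟩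
    simp only [hs₁]
    split
    · exact (hbd i).1
    · apply max_le (hbd i).1
      have hji : j ≤ i.1 := by omega
      have := strictMono_fin_le e.strictMono (i.1 - j) ⟨j, hjr⟩ i
        (by have : ((⟨j, hjr⟩ : Fin r) : ℕ) = j := rfl; omega)
      omega
  · intro hBmem1
    obtain ⟨hcard, hbd1⟩ := (mem_transBases_iff hst1).1 hBmem1
    set e := B.orderEmbOfFin hcard with he
    have hjr : j < r := by omega
    refine ⟨(mem_transBases_iff hst).2 ⟨hcard, fun i => ?_⟩, ?_⟩
    · refine ⟨le_trans ?_ (hbd1 i).1, (hbd1 i).2⟩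
      simp only [hs₁]
      split
      · exact le_rfl
      · exact le_max_left _ _
    · have hej : x + 1 ≤ e ⟨j, hjr⟩ := by
        have := (hbd1 ⟨j, hjr⟩).1
        simp only [hs₁, if_neg (by omega : ¬ (j + 1 ≤ j))] at this
        have hmax : x + (j + 1 - j) ≤ max (s (j+1)) (x + (j + 1 - j)) := le_max_right _ _
        omega
      rw [filter_card_eq hcard, ← he]
      have hsub : (univ.filter fun i : Fin r => e i ≤ x)
          ⊆ univ.filter fun i : Fin r => i.1 < j := by
        intro i hi
        rw [mem_filter] at hi ⊢
        refine ⟨mem_univ _, ?_⟩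
        by_contra hc
        push_neg at hc
        have : e ⟨j, hjr⟩ ≤ e i := e.monotone (by
          simp only [Fin.le_def]
          have : ((⟨j, hjr⟩ : Fin r) : ℕ) = j := rfl
          omega)
        omega
      have := Finset.card_le_card hsub
      rw [card_val_lt] at this
      omega

lemma pres2 (hst : IsIntervalPres m r s t) {x j : ℕ} (hj1 : 1 ≤ j) (hj2 : j + 1 ≤ r)
    (h1 : s j < x) (h2 : x < t j) :
    IsIntervalPres m r s (fun k => if k ≤ j then min (t k) (x - (j - k)) else t k) ∧
    {B ∈ transBases m r s t | (B.filter (fun b => x + 1 ≤ b)).card ≤ r - j}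
      = transBases m r s (fun k => if k ≤ j then min (t k) (x - (j - k)) else t k) := by
  classical
  set t₂ : ℕ → ℕ := fun k => if k ≤ j then min (t k) (x - (j - k)) else t k with ht₂
  have hsjj : j ≤ s j := by
    have := pres_gap hst (k := 1) (l := j) le_rfl hj1 (by omega)
    have := (hst.1 1 le_rfl (by omega)).1
    omega
  have hjx : j < x := by omega
  have hsk : ∀ k, 1 ≤ k → k ≤ j → s k + (j - k) ≤ s j := by
    intro k hk1 hkj
    exact (pres_gap hst hk1 hkj (by omega)).1
  have hst2 : IsIntervalPres m r s t₂ := by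
    constructor
    · intro k hk1 hkr
      have h0 := hst.1 k hk1 hkr
      simp only [ht₂]
      split
      · have := hsk k hk1 (by omega)
        omega
      · exact h0
    · intro k hk1 hkr
      have h0 := hst.2 k hk1 hkr
      simp only [ht₂]
      rcases lt_trichotomy k j with h | h | h
      · rw [if_pos (by omega), if_pos (by omega)]
        exact ⟨h0.1, by omega⟩
      · subst h
        rw [if_pos (by omega), if_neg (by omega)]
        exact ⟨h0.1, by omega⟩
      · rw [if_neg (by omega), if_neg (by omega)]
        exact h0
  refine ⟨hst2, ?_⟩
  ext B
  simp only [Set.mem_setOf_eq]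
  constructor
  · rintro ⟨hBmem, hBg⟩
    obtain ⟨hcard, hbd⟩ := (mem_transBases_iff hst).1 hBmem
    set e := B.orderEmbOfFin hcard with he
    have hpar := filter_partition (x := x) (hBmem.2.1)
    have hBf : j ≤ (B.filter (· ≤ x)).card := by omega
    have hj1r : j - 1 < r := by omega
    have hej : e ⟨j-1, hj1r⟩ ≤ x := by
      by_contra hc
      push_neg at hc
      rw [filter_card_eq hcard, ← he] at hBf
      have hsub : (univ.filter fun i : Fin r => e i ≤ x)
          ⊆ univ.filter fun i : Fin r => i.1 < j - 1 := by
        intro i hi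
        rw [mem_filter] at hi ⊢
        refine ⟨mem_univ _, ?_⟩
        by_contra hc'
        push_neg at hc'
        have : e ⟨j-1, hj1r⟩ ≤ e i := e.monotone (by
          simp only [Fin.le_def]
          have : ((⟨j-1, hj1r⟩ : Fin r) : ℕ) = j - 1 := rfl
          omega)
        omega
      have := Finset.card_le_card hsub
      rw [card_val_lt] at this
      omega
    apply (mem_transBases_iff hst2).2
    refine ⟨hcard, fun i => ⟨(hbd i).1, ?_⟩⟩
    simp only [ht₂]
    split
    · apply le_min (hbd i).2
      have hij : i.1 + 1 ≤ j := by omega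
      have := strictMono_fin_le e.strictMono (j - 1 - i.1) i ⟨j-1, hj1r⟩
        (by have : ((⟨j-1, hj1r⟩ : Fin r) : ℕ) = j - 1 := rfl; omega)
      have hv : ((⟨j-1, hj1r⟩ : Fin r) : ℕ) = j - 1 := rfl
      omega
    · exact (hbd i).2
  · intro hBmem2
    obtain ⟨hcard, hbd2⟩ := (mem_transBases_iff hst2).1 hBmem2
    set e := B.orderEmbOfFin hcard with he
    have hj1r : j - 1 < r := by omega
    have hBmem : B ∈ transBases m r s t := by
      apply (mem_transBases_iff hst).2
      refine ⟨hcard, fun i => ⟨(hbd2 i).1, le_trans (hbd2 i).2 ?_⟩⟩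
      simp only [ht₂]
      split
      · exact min_le_left _ _
      · exact le_rfl
    refine ⟨hBmem, ?_⟩
    have hej : e ⟨j-1, hj1r⟩ ≤ x := by
      have := (hbd2 ⟨j-1, hj1r⟩).2
      simp only [ht₂, if_pos (by omega : j - 1 + 1 ≤ j)] at this
      have : e ⟨j-1, hj1r⟩ ≤ x - (j - (j - 1 + 1)) := le_trans this (min_le_right _ _)
      omega
    have hpar := filter_partition (x := x) (hBmem.2.1)
    have hBf : j ≤ (B.filter (· ≤ x)).card := by
      rw [filter_card_eq hcard, ← he]
      have hsub : Finset.Iic (⟨j-1, hj1r⟩ : Fin r)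
          ⊆ univ.filter fun i : Fin r => e i ≤ x := by
        intro i hi
        rw [mem_Iic] at hi
        rw [mem_filter]
        exact ⟨mem_univ _, le_trans (e.monotone hi) hej⟩
      have := Finset.card_le_card hsub
      rw [Fin.card_Iic] at this
      have hv : ((⟨j-1, hj1r⟩ : Fin r) : ℕ) = j - 1 := rfl
      omega
    omega

lemma basesPoly_eq (𝔖 : Set (Finset ℕ)) : basesPoly 𝔖 = convexHull ℝ (ind '' 𝔖) := by
  unfold basesPoly
  congr 1
  ext v
  simp only [Set.mem_setOf_eq, Set.mem_image]
  constructor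
  · rintro ⟨B, hB, rfl⟩
    exact ⟨B, hB, rfl⟩
  · rintro ⟨B, hB, rfl⟩
    exact ⟨B, hB, rfl⟩

lemma direction_eq_of_pinch {Q₁ Q : Set (ℕ → ℝ)} (hsub : Q₁ ⊆ Q)
    {q0 : ℕ → ℝ} (hq0 : q0 ∈ Q₁) {θ : ℝ} (hθ : 0 < θ)
    (habsorb : ∀ y ∈ Q, q0 + θ • (y - q0) ∈ Q₁) :
    (affineSpan ℝ Q₁).direction = (affineSpan ℝ Q).direction := by
  apply le_antisymm
  · exact AffineSubspace.direction_le (affineSpan_mono ℝ hsub)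
  · rw [direction_affineSpan, direction_affineSpan, vectorSpan_def, vectorSpan_def]
    apply Submodule.span_le.2
    rintro v ⟨y, hy, y', hy', rfl⟩
    have hkey : ∀ z ∈ Q, z - q0 ∈ Submodule.span ℝ (Q₁ -ᵥ Q₁) := by
      intro z hz
      have hz1 := habsorb z hz
      have hv : (q0 + θ • (z - q0)) -ᵥ q0 ∈ Q₁ -ᵥ Q₁ := Set.vsub_mem_vsub hz1 hq0
      have hv' : (q0 + θ • (z - q0)) -ᵥ q0 = θ • (z - q0) := by
        rw [vsub_eq_sub]
        abel
      rw [hv'] at hv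
      have h1 := Submodule.subset_span (R := ℝ) hv
      have h2 := Submodule.smul_mem (Submodule.span ℝ (Q₁ -ᵥ Q₁)) θ⁻¹ h1
      rwa [smul_smul, inv_mul_cancel₀ (ne_of_gt hθ), one_smul] at h2
    show y -ᵥ y' ∈ Submodule.span ℝ (Q₁ -ᵥ Q₁)
    have hvy : y -ᵥ y' = (y - q0) - (y' - q0) := by
      rw [vsub_eq_sub]
      abel
    rw [hvy]
    exact sub_mem (hkey y hy) (hkey y' hy')

end Stmt15

set_option maxHeartbeats 1000000 in
open Stmt15 in
/-- Alfonsín–Chatelain split for lattice path matroids: let `M[P,Q]` be the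
lattice path matroid on `{1,…,m+r}` with interval presentation `N_k = [s k, t k]`.  If
`s j < x < t j` and `s (j+1) < x+1 < t (j+1)` for some `1 ≤ j ≤ r-1`, then with
`𝔅₁ = {B basis : |B ∩ {1,…,x}| ≤ j}` and `𝔅₂ = {B basis : |B ∩ {x+1,…,m+r}| ≤ r-j}`,
the polytope `P(M[P,Q])` is the union of the two full-dimensional matroid polytopes
`P(M₁)`, `P(M₂)`, neither equal to it, intersecting in a common face — a nontrivial
hyperplane split — and `M₁`, `M₂` are again lattice path matroids. -/
theorem stmt15 (m r : ℕ) (s t : ℕ → ℕ) (hst : IsIntervalPres m r s t)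
    (x j : ℕ) (hj1 : 1 ≤ j) (hj2 : j ≤ r - 1)
    (h1 : s j < x) (h2 : x < t j) (h3 : s (j + 1) < x + 1) (h4 : x + 1 < t (j + 1)) :
    let 𝔅 : Set (Finset ℕ) := transBases m r s t
    let 𝔅₁ : Set (Finset ℕ) := {B ∈ 𝔅 | (B.filter (· ≤ x)).card ≤ j}
    let 𝔅₂ : Set (Finset ℕ) := {B ∈ 𝔅 | (B.filter (fun b => x + 1 ≤ b)).card ≤ r - j}
    basesPoly 𝔅 = basesPoly 𝔅₁ ∪ basesPoly 𝔅₂ ∧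
    basesPoly 𝔅₁ ≠ basesPoly 𝔅 ∧ basesPoly 𝔅₂ ≠ basesPoly 𝔅 ∧
    Module.finrank ℝ (affineSpan ℝ (basesPoly 𝔅₁)).direction
      = Module.finrank ℝ (affineSpan ℝ (basesPoly 𝔅)).direction ∧
    Module.finrank ℝ (affineSpan ℝ (basesPoly 𝔅₂)).direction
      = Module.finrank ℝ (affineSpan ℝ (basesPoly 𝔅)).direction ∧
    IsExtreme ℝ (basesPoly 𝔅₁) (basesPoly 𝔅₁ ∩ basesPoly 𝔅₂) ∧
    IsExtreme ℝ (basesPoly 𝔅₂) (basesPoly 𝔅₁ ∩ basesPoly 𝔅₂) ∧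
    (∃ s₁ t₁, IsIntervalPres m r s₁ t₁ ∧ 𝔅₁ = transBases m r s₁ t₁) ∧
    (∃ s₂ t₂, IsIntervalPres m r s₂ t₂ ∧ 𝔅₂ = transBases m r s₂ t₂) := by
  intro 𝔅 𝔅₁ 𝔅₂
  classical
  have hjr : j + 1 ≤ r := by omega
  have hj_le_r : j ≤ r := by omega
  rw [basesPoly_eq 𝔅, basesPoly_eq 𝔅₁, basesPoly_eq 𝔅₂]
  have hsub1 : 𝔅₁ ⊆ 𝔅 := fun B hB => hB.1
  have hsub2 : 𝔅₂ ⊆ 𝔅 := fun B hB => hB.1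
  have hIcc : ∀ B ∈ 𝔅, B ⊆ Finset.Icc 1 (m+r) := fun B hB => hB.1
  have hcard : ∀ B ∈ 𝔅, B.card = r := fun B hB => hB.2.1
  have hL1ind : ∀ B ∈ 𝔅, Lfun 1 x (ind B) = ((B.filter (· ≤ x)).card : ℝ) :=
    fun B hB => Lfun_ind_le (hIcc B hB)
  have hL2ind : ∀ B ∈ 𝔅, Lfun (x+1) (m+r) (ind B)
      = ((B.filter (fun b => x+1 ≤ b)).card : ℝ) := fun B hB => Lfun_ind_ge (hIcc B hB)
  have hcastrj : ((r-j:ℕ):ℝ) = (r:ℝ) - (j:ℝ) := by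
    rw [Nat.cast_sub hj_le_r]
  have hple : ∀ q ∈ convexHull ℝ (ind '' 𝔅₁), Lfun 1 x q ≤ (j:ℝ) := by
    intro q hq
    apply hull_le _ _ (fun B hB => ?_) hq
    rw [hL1ind B (hsub1 hB)]
    exact_mod_cast hB.2
  have hqle : ∀ q ∈ convexHull ℝ (ind '' 𝔅₂),
      Lfun (x+1) (m+r) q ≤ ((r-j:ℕ):ℝ) := by
    intro q hq
    apply hull_le _ _ (fun B hB => ?_) hq
    rw [hL2ind B (hsub2 hB)]
    exact_mod_cast hB.2
  have haff : ∀ q ∈ convexHull ℝ (ind '' 𝔅),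
      Lfun 1 x q + Lfun (x+1) (m+r) q = (r:ℝ) := by
    intro q hq
    have h := hull_eq_affine (Lfun 1 x + Lfun (x+1) (m+r)) (r:ℝ) (fun B hB => by
      rw [LinearMap.add_apply, hL1ind B hB, hL2ind B hB]
      have hper := filter_partition (x := x) (hcard B hB)
      exact_mod_cast congrArg (fun n : ℕ => (n:ℝ)) hper) hq
    rwa [LinearMap.add_apply] at h
  have hL1le_r : ∀ q ∈ convexHull ℝ (ind '' 𝔅), Lfun 1 x q ≤ (r:ℝ) := by
    intro q hq
    apply hull_le _ _ (fun B hB => ?_) hq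
    rw [hL1ind B hB]
    have h5 := Finset.card_filter_le B (· ≤ x)
    have h6 := hcard B hB
    have h7 : (B.filter (· ≤ x)).card ≤ r := by omega
    exact_mod_cast h7
  have hL2le_r : ∀ q ∈ convexHull ℝ (ind '' 𝔅), Lfun (x+1) (m+r) q ≤ (r:ℝ) := by
    intro q hq
    apply hull_le _ _ (fun B hB => ?_) hq
    rw [hL2ind B hB]
    have h5 := Finset.card_filter_le B (fun b => x+1 ≤ b)
    have h6 := hcard B hB
    have h7 : (B.filter (fun b => x+1 ≤ b)).card ≤ r := by omega
    exact_mod_cast h7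
  -- specific bases
  obtain ⟨B1, hB1good, hB1f⟩ := exB hst (x := x) (c := j+1) hjr
    (Or.inr (by omega))
    (by
      rcases Nat.eq_or_lt_of_le hjr with h | h
      · exact Or.inl h
      · right
        have := (hst.2 (j+1) (by omega) h).2
        omega)
  obtain ⟨B2, hB2good, hB2f⟩ := exB hst (x := x) (c := j-1) (by omega)
    (by
      rcases Nat.eq_or_lt_of_le hj1 with h | h
      · exact Or.inl (by omega)
      · right
        have := (pres_strict hst (k₁ := j-1) (k₂ := j) (by omega) (by omega) hj_le_r).1
        omega)
    (by
      right
      have hj11 : j - 1 + 1 = j := by omega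
      rw [hj11]
      exact h2)
  have hB1mem : B1 ∈ 𝔅 := (mem_transBases_iff hst).2 hB1good
  have hB2mem : B2 ∈ 𝔅 := (mem_transBases_iff hst).2 hB2good
  have hB1P : ind B1 ∈ convexHull ℝ (ind '' 𝔅) :=
    subset_convexHull ℝ _ ⟨B1, hB1mem, rfl⟩
  have hB2P : ind B2 ∈ convexHull ℝ (ind '' 𝔅) :=
    subset_convexHull ℝ _ ⟨B2, hB2mem, rfl⟩
  have hB2in1 : B2 ∈ 𝔅₁ := ⟨hB2mem, by omega⟩
  have hB1in2 : B1 ∈ 𝔅₂ := by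
    refine ⟨hB1mem, ?_⟩
    have := filter_partition (x := x) (hcard B1 hB1mem)
    omega
  have hB2P1 : ind B2 ∈ convexHull ℝ (ind '' 𝔅₁) :=
    subset_convexHull ℝ _ ⟨B2, hB2in1, rfl⟩
  have hB1P2 : ind B1 ∈ convexHull ℝ (ind '' 𝔅₂) :=
    subset_convexHull ℝ _ ⟨B1, hB1in2, rfl⟩
  -- union
  have hUnion : convexHull ℝ (ind '' 𝔅)
      = convexHull ℝ (ind '' 𝔅₁) ∪ convexHull ℝ (ind '' 𝔅₂) := by
    apply Set.Subset.antisymm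
    · intro p hp
      rcases le_or_gt (Lfun 1 x p) (j:ℝ) with hc | hc
      · exact Or.inl (split_le hst x j hp hc)
      · right
        apply split_ge hst x j hj_le_r hp
        have haffp := haff p hp
        rw [hcastrj]
        linarith
    · apply Set.union_subset
      · exact convexHull_mono (Set.image_mono hsub1)
      · exact convexHull_mono (Set.image_mono hsub2)
  -- the two inequalities
  have hne1 : convexHull ℝ (ind '' 𝔅₁) ≠ convexHull ℝ (ind '' 𝔅) := by
    intro h
    have hmem : ind B1 ∈ convexHull ℝ (ind '' 𝔅₁) := h ▸ hB1P
    have hle := hple (ind B1) hmem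
    rw [hL1ind B1 hB1mem, hB1f] at hle
    have : (j:ℕ)+1 ≤ j := by exact_mod_cast hle
    omega
  have hne2 : convexHull ℝ (ind '' 𝔅₂) ≠ convexHull ℝ (ind '' 𝔅) := by
    intro h
    have hmem : ind B2 ∈ convexHull ℝ (ind '' 𝔅₂) := h ▸ hB2P
    have hle := hqle (ind B2) hmem
    rw [hL2ind B2 hB2mem] at hle
    have hg2 : (B2.filter (fun b => x+1 ≤ b)).card = r - (j-1) := by
      have := filter_partition (x := x) (hcard B2 hB2mem)
      omega
    rw [hg2] at hle
    have : r - (j-1) ≤ r - j := by exact_mod_cast hle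
    omega
  -- dimensions
  set θ : ℝ := 1/((r:ℝ)+1) with hθdef
  have hrpos : (0:ℝ) < (r:ℝ) + 1 := by positivity
  have hθpos : 0 < θ := by positivity
  have hθr : θ * ((r:ℝ)+1) = 1 := by
    rw [hθdef]
    field_simp
  have hθle1 : θ ≤ 1 := by
    nlinarith [mul_nonneg hθpos.le (Nat.cast_nonneg r)]
  have hdim1 : (affineSpan ℝ (convexHull ℝ (ind '' 𝔅₁))).direction
      = (affineSpan ℝ (convexHull ℝ (ind '' 𝔅))).direction := by
    apply direction_eq_of_pinch (convexHull_mono (Set.image_mono hsub1)) hB2P1 hθpos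
    intro y hy
    have hzQ : ind B2 + θ • (y - ind B2) ∈ convexHull ℝ (ind '' 𝔅) := by
      have h := (convex_convexHull ℝ (ind '' 𝔅)) hB2P hy
        (by linarith : (0:ℝ) ≤ 1 - θ) hθpos.le (by ring)
      convert h using 1
      module
    apply split_le hst x j hzQ
    rw [map_add, map_smul, map_sub, smul_eq_mul]
    rw [hL1ind B2 hB2mem, hB2f]
    have hLy := hL1le_r y hy
    have hcastj1 : ((j-1:ℕ):ℝ) = (j:ℝ) - 1 := by
      rw [Nat.cast_sub hj1]
      norm_num
    rw [hcastj1]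
    have e1 : θ * Lfun 1 x y ≤ θ * (r:ℝ) := mul_le_mul_of_nonneg_left hLy hθpos.le
    have e2 : 0 ≤ θ * (j:ℝ) := mul_nonneg hθpos.le (Nat.cast_nonneg j)
    nlinarith [hθr]
  have hdim2 : (affineSpan ℝ (convexHull ℝ (ind '' 𝔅₂))).direction
      = (affineSpan ℝ (convexHull ℝ (ind '' 𝔅))).direction := by
    apply direction_eq_of_pinch (convexHull_mono (Set.image_mono hsub2)) hB1P2 hθpos
    intro y hy
    have hzQ : ind B1 + θ • (y - ind B1) ∈ convexHull ℝ (ind '' 𝔅) := by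
      have h := (convex_convexHull ℝ (ind '' 𝔅)) hB1P hy
        (by linarith : (0:ℝ) ≤ 1 - θ) hθpos.le (by ring)
      convert h using 1
      module
    apply split_ge hst x j hj_le_r hzQ
    rw [map_add, map_smul, map_sub, smul_eq_mul]
    rw [hL2ind B1 hB1mem]
    have hg1 : (B1.filter (fun b => x+1 ≤ b)).card = r - (j+1) := by
      have := filter_partition (x := x) (hcard B1 hB1mem)
      omega
    rw [hg1]
    have hLy := hL2le_r y hy
    have hcast1 : ((r-(j+1):ℕ):ℝ) = (r:ℝ) - (j:ℝ) - 1 := by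
      rw [Nat.cast_sub hjr]
      push_cast
      ring
    rw [hcast1, hcastrj]
    have e1 : θ * Lfun (x+1) (m+r) y ≤ θ * (r:ℝ) :=
      mul_le_mul_of_nonneg_left hLy hθpos.le
    have e2 : 0 ≤ θ * ((r:ℝ) - (j:ℝ)) := by
      have : (j:ℝ) ≤ (r:ℝ) := by exact_mod_cast hj_le_r
      apply mul_nonneg hθpos.le
      linarith
    nlinarith [hθr]
  -- faces
  have hL1geP2 : ∀ y ∈ convexHull ℝ (ind '' 𝔅₂), (j:ℝ) ≤ Lfun 1 x y := by
    intro y hy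
    have h2 := hqle y hy
    have h3 := haff y (convexHull_mono (Set.image_mono hsub2) hy)
    rw [hcastrj] at h2
    linarith
  have hL2geP1 : ∀ y ∈ convexHull ℝ (ind '' 𝔅₁),
      ((r-j:ℕ):ℝ) ≤ Lfun (x+1) (m+r) y := by
    intro y hy
    have h2 := hple y hy
    have h3 := haff y (convexHull_mono (Set.image_mono hsub1) hy)
    rw [hcastrj]
    linarith
  have hface1 : ∀ y ∈ convexHull ℝ (ind '' 𝔅₁), Lfun 1 x y = (j:ℝ) →
      y ∈ convexHull ℝ (ind '' 𝔅₂) := by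
    intro y hy heq
    have hf := face (Lfun 1 x) (j:ℝ) (fun B hB => by
      rw [hL1ind B (hsub1 hB)]
      exact_mod_cast hB.2) hy heq
    refine convexHull_mono (Set.image_mono ?_) hf
    rintro B ⟨hB1, hBL⟩
    have hfB : (B.filter (· ≤ x)).card = j := by
      rw [hL1ind B (hsub1 hB1)] at hBL
      exact_mod_cast hBL
    refine ⟨hsub1 hB1, ?_⟩
    have := filter_partition (x := x) (hcard B (hsub1 hB1))
    omega
  have hface2 : ∀ y ∈ convexHull ℝ (ind '' 𝔅₂),
      Lfun (x+1) (m+r) y = ((r-j:ℕ):ℝ) → y ∈ convexHull ℝ (ind '' 𝔅₁) := by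
    intro y hy heq
    have hf := face (Lfun (x+1) (m+r)) (((r-j:ℕ)):ℝ) (fun B hB => by
      rw [hL2ind B (hsub2 hB)]
      exact_mod_cast hB.2) hy heq
    refine convexHull_mono (Set.image_mono ?_) hf
    rintro B ⟨hB2, hBL⟩
    have hgB : (B.filter (fun b => x+1 ≤ b)).card = r - j := by
      rw [hL2ind B (hsub2 hB2)] at hBL
      exact_mod_cast hBL
    refine ⟨hsub2 hB2, ?_⟩
    have := filter_partition (x := x) (hcard B (hsub2 hB2))
    omega
  have hExt1 : IsExtreme ℝ (convexHull ℝ (ind '' 𝔅₁))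
      (convexHull ℝ (ind '' 𝔅₁) ∩ convexHull ℝ (ind '' 𝔅₂)) := by
    constructor
    · exact Set.inter_subset_left
    · rintro x1 hx1 x2 hx2 z ⟨hz1, hz2⟩ hzseg
      obtain ⟨a, b, ha, hb, hab, hz⟩ := hzseg
      have hL1z : Lfun 1 x z = (j:ℝ) :=
        le_antisymm (hple z hz1) (hL1geP2 z hz2)
      have hexp : a * Lfun 1 x x1 + b * Lfun 1 x x2 = (j:ℝ) := by
        rw [← hL1z, ← hz, map_add, map_smul, map_smul, smul_eq_mul, smul_eq_mul]
      have hLx1 : Lfun 1 x x1 ≤ (j:ℝ) := hple x1 hx1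
      have hLx2 : Lfun 1 x x2 ≤ (j:ℝ) := hple x2 hx2
      have habj : a * (j:ℝ) + b * (j:ℝ) = (j:ℝ) := by
        rw [← add_mul, hab, one_mul]
      have hx1j : Lfun 1 x x1 = (j:ℝ) := by
        by_contra hne
        have hlt : Lfun 1 x x1 < (j:ℝ) := lt_of_le_of_ne hLx1 hne
        linarith [mul_pos ha (sub_pos.2 hlt), mul_le_mul_of_nonneg_left hLx2 hb.le]
      have hx2j : Lfun 1 x x2 = (j:ℝ) := by
        by_contra hne
        have hlt : Lfun 1 x x2 < (j:ℝ) := lt_of_le_of_ne hLx2 hne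
        linarith [mul_pos hb (sub_pos.2 hlt), mul_le_mul_of_nonneg_left hLx1 ha.le]
      exact ⟨hx1, hface1 x1 hx1 hx1j⟩
  have hExt2 : IsExtreme ℝ (convexHull ℝ (ind '' 𝔅₂))
      (convexHull ℝ (ind '' 𝔅₁) ∩ convexHull ℝ (ind '' 𝔅₂)) := by
    constructor
    · exact Set.inter_subset_right
    · rintro x1 hx1 x2 hx2 z ⟨hz1, hz2⟩ hzseg
      obtain ⟨a, b, ha, hb, hab, hz⟩ := hzseg
      have hL2z : Lfun (x+1) (m+r) z = ((r-j:ℕ):ℝ) :=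
        le_antisymm (hqle z hz2) (hL2geP1 z hz1)
      have hexp : a * Lfun (x+1) (m+r) x1 + b * Lfun (x+1) (m+r) x2
          = ((r-j:ℕ):ℝ) := by
        rw [← hL2z, ← hz, map_add, map_smul, map_smul, smul_eq_mul, smul_eq_mul]
      have hLx1 : Lfun (x+1) (m+r) x1 ≤ ((r-j:ℕ):ℝ) := hqle x1 hx1
      have hLx2 : Lfun (x+1) (m+r) x2 ≤ ((r-j:ℕ):ℝ) := hqle x2 hx2
      have habj : a * ((r-j:ℕ):ℝ) + b * ((r-j:ℕ):ℝ) = ((r-j:ℕ):ℝ) := by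
        rw [← add_mul, hab, one_mul]
      have hx1j : Lfun (x+1) (m+r) x1 = ((r-j:ℕ):ℝ) := by
        by_contra hne
        have hlt := lt_of_le_of_ne hLx1 hne
        linarith [mul_pos ha (sub_pos.2 hlt), mul_le_mul_of_nonneg_left hLx2 hb.le]
      have hx2j : Lfun (x+1) (m+r) x2 = ((r-j:ℕ):ℝ) := by
        by_contra hne
        have hlt := lt_of_le_of_ne hLx2 hne
        linarith [mul_pos hb (sub_pos.2 hlt), mul_le_mul_of_nonneg_left hLx1 ha.le]
      exact ⟨hface2 x1 hx1 hx1j, hx1⟩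
  obtain ⟨hpres1a, hpres1b⟩ := pres1 hst hj1 hjr h1 h3 h4
  obtain ⟨hpres2a, hpres2b⟩ := pres2 hst hj1 hjr h1 h2
  exact ⟨hUnion, hne1, hne2, by rw [hdim1], by rw [hdim2], hExt1, hExt2,
    ⟨_, _, hpres1a, hpres1b⟩, ⟨_, _, hpres2a, hpres2b⟩⟩
end

section
/- The normalized volume of the border strip matroid polytope P(S(p)) equals f_{S(p)}, the number of standard Young tableaux of border strip shape S(p); equivalently, it equals the number of permutations w of {1,...,n-1} such that w^{-1} has descent at position i exactly when the (i+1)-st box of the border strip lies above the i-th box (i.e., step i+1 of p is a specified step type). -/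
open Finset MeasureTheory

namespace BSP17

variable {m : ℕ}

def cube (m : ℕ) : Set (Fin m → ℝ) := {t | ∀ i, 0 ≤ t i ∧ t i ≤ 1}

def chamber (σ : Equiv.Perm (Fin m)) : Set (Fin m → ℝ) :=
  cube m ∩ {t | StrictMono (t ∘ σ)}

lemma measurableSet_cube : MeasurableSet (cube m) := by
  have : cube m = Set.univ.pi fun _ => Set.Icc (0:ℝ) 1 := by
    ext t; simp only [cube, Set.mem_setOf_eq, Set.mem_pi, Set.mem_univ, Set.mem_Icc,
      forall_const]
  rw [this]; exact MeasurableSet.univ_pi fun _ => measurableSet_Icc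

lemma volume_cube : volume (cube m) = 1 := by
  have : cube m = Set.univ.pi fun _ => Set.Icc (0:ℝ) 1 := by
    ext t; simp only [cube, Set.mem_setOf_eq, Set.mem_pi, Set.mem_univ, Set.mem_Icc,
      forall_const]
  rw [this, volume_pi_pi]; simp [Real.volume_Icc]

lemma measurableSet_chamber (σ : Equiv.Perm (Fin m)) : MeasurableSet (chamber σ) := by
  refine measurableSet_cube.inter ?_
  have : {t : Fin m → ℝ | StrictMono (t ∘ σ)} =
      ⋂ (i) (j) (_ : i < j), {t : Fin m → ℝ | t (σ i) < t (σ j)} := by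
    ext t; simp [StrictMono]
  rw [this]
  exact .iInter fun i => .iInter fun j => .iInter fun _ =>
    measurableSet_lt (measurable_pi_apply _) (measurable_pi_apply _)

def badset (m : ℕ) : Set (Fin m → ℝ) := ⋃ (i) (j) (_ : i ≠ j), {t | t i = t j}

lemma volume_badset : volume (badset m) = 0 := by
  refine measure_iUnion_null fun i => measure_iUnion_null fun j => measure_iUnion_null fun hij => ?_
  have : {t : Fin m → ℝ | t i = t j} =
      (LinearMap.ker ((LinearMap.proj i : (Fin m → ℝ) →ₗ[ℝ] ℝ) - LinearMap.proj j) : Set _) := by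
    ext t; simp [LinearMap.mem_ker, sub_eq_zero]
  rw [this]
  apply Measure.addHaar_submodule
  rw [Ne, Submodule.eq_top_iff']
  push_neg
  refine ⟨Pi.single i 1, ?_⟩
  simp [LinearMap.mem_ker, sub_eq_zero, Pi.single_apply, hij.symm]

lemma cube_subset_union :
    cube m ⊆ (⋃ σ : Equiv.Perm (Fin m), chamber σ) ∪ badset m := by
  intro t ht
  by_cases hinj : Function.Injective t
  · left
    refine Set.mem_iUnion.2 ⟨Tuple.sort t, ht, ?_⟩
    exact (Tuple.monotone_sort t).strictMono_of_injective (hinj.comp (Equiv.injective _))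
  · right
    simp only [Function.Injective, not_forall] at hinj
    obtain ⟨i, j, hij, hne⟩ := hinj
    exact Set.mem_iUnion.2 ⟨i, Set.mem_iUnion.2 ⟨j, Set.mem_iUnion.2 ⟨hne, hij⟩⟩⟩

lemma chamber_disjoint {σ τ : Equiv.Perm (Fin m)} (h : σ ≠ τ) :
    Disjoint (chamber σ) (chamber τ) := by
  rw [Set.disjoint_left]
  rintro t ⟨_, hσ⟩ ⟨_, hτ⟩
  apply h
  have hinj : Function.Injective t := by
    have ht : t = (t ∘ σ) ∘ σ.symm := by funext i; simp
    rw [ht]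
    exact hσ.injective.comp σ.symm.injective
  have hcomp : t ∘ σ = t ∘ τ := Tuple.unique_monotone hσ.monotone hτ.monotone
  exact Equiv.ext fun i => hinj (congrFun hcomp i)

lemma volume_chamber_eq (σ : Equiv.Perm (Fin m)) :
    volume (chamber σ) = volume (chamber (1 : Equiv.Perm (Fin m))) := by
  have F := MeasureTheory.volume_measurePreserving_piCongrLeft (fun _ : Fin m => ℝ) σ.symm
  have hApp : ∀ t : Fin m → ℝ,
      (MeasurableEquiv.piCongrLeft (fun _ : Fin m => ℝ) σ.symm) t = t ∘ σ := by
    intro t; funext i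
    simpa using MeasurableEquiv.piCongrLeft_apply_apply (β := fun _ : Fin m => ℝ) σ.symm t (σ i)
  have hpre : (MeasurableEquiv.piCongrLeft (fun _ : Fin m => ℝ) σ.symm) ⁻¹' (chamber 1)
      = chamber σ := by
    ext t
    simp only [Set.mem_preimage, hApp, chamber, Set.mem_inter_iff, Set.mem_setOf_eq]
    constructor
    · rintro ⟨hc, hs⟩
      refine ⟨fun i => by simpa using hc (σ.symm i), by simpa using hs⟩
    · rintro ⟨hc, hs⟩
      refine ⟨fun i => hc (σ i), by simpa using hs⟩
  rw [← hpre]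
  exact F.measure_preimage (measurableSet_chamber 1).nullMeasurableSet

lemma factorial_mul_volume_chamber_one :
    (Nat.factorial m : ENNReal) * volume (chamber (1 : Equiv.Perm (Fin m))) = 1 := by
  have hle : volume (⋃ σ : Equiv.Perm (Fin m), chamber σ) = 1 := by
    apply le_antisymm
    · calc volume (⋃ σ : Equiv.Perm (Fin m), chamber σ) ≤ volume (cube m) :=
            measure_mono (Set.iUnion_subset fun σ => Set.inter_subset_left)
      _ = 1 := volume_cube
    · calc (1:ENNReal) = volume (cube m) := volume_cube.symm
      _ ≤ volume ((⋃ σ : Equiv.Perm (Fin m), chamber σ) ∪ badset m) :=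
            measure_mono cube_subset_union
      _ ≤ volume (⋃ σ : Equiv.Perm (Fin m), chamber σ) + volume (badset m) :=
            measure_union_le _ _
      _ = volume (⋃ σ : Equiv.Perm (Fin m), chamber σ) := by rw [volume_badset, add_zero]
  rw [← hle, measure_iUnion (fun σ τ h => chamber_disjoint h)
    (fun σ => measurableSet_chamber σ), tsum_fintype,
    Finset.sum_congr rfl (fun σ _ => volume_chamber_eq σ), Finset.sum_const,
    Finset.card_univ, Fintype.card_perm, Fintype.card_fin, nsmul_eq_mul]

def region (m : ℕ) (desc : ℕ → Prop) : Set (Fin m → ℝ) :=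
  cube m ∩ {t | ∀ (i : Fin m) (h : (i:ℕ) + 1 < m),
    (desc (i:ℕ) → t ⟨(i:ℕ) + 1, h⟩ ≤ t i) ∧ (¬ desc (i:ℕ) → t i ≤ t ⟨(i:ℕ) + 1, h⟩)}

def good (m : ℕ) (desc : ℕ → Prop) (σ : Equiv.Perm (Fin m)) : Prop :=
  ∀ (i : Fin m) (h : (i:ℕ) + 1 < m), (σ⁻¹ ⟨(i:ℕ) + 1, h⟩ < σ⁻¹ i ↔ desc (i:ℕ))

lemma key_iff {σ : Equiv.Perm (Fin m)} {t : Fin m → ℝ} (hs : StrictMono (t ∘ σ))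
    (a b : Fin m) : t a < t b ↔ σ⁻¹ a < σ⁻¹ b := by
  have := hs.lt_iff_lt (a := σ.symm a) (b := σ.symm b)
  simp only [Function.comp_apply, Equiv.apply_symm_apply] at this
  rw [show σ⁻¹ = σ.symm from rfl]
  exact this

lemma succ_ne {i : Fin m} (h : (i:ℕ) + 1 < m) : (⟨(i:ℕ) + 1, h⟩ : Fin m) ≠ i := by
  simp [Fin.ext_iff]

lemma chamber_subset_region {desc : ℕ → Prop} {σ : Equiv.Perm (Fin m)}
    (hσ : good m desc σ) : chamber σ ⊆ region m desc := by
  rintro t ⟨hc, hs⟩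
  refine ⟨hc, fun i h => ?_⟩
  constructor
  · intro hd
    exact le_of_lt ((key_iff hs _ _).2 ((hσ i h).2 hd))
  · intro hd
    have h1 : ¬ (σ⁻¹ (⟨(i:ℕ) + 1, h⟩ : Fin m) < σ⁻¹ i) := fun hc' => hd ((hσ i h).1 hc')
    have h2 : σ⁻¹ i ≠ σ⁻¹ ⟨(i:ℕ) + 1, h⟩ :=
      fun hc' => succ_ne h (σ⁻¹.injective hc'.symm)
    have h3 : σ⁻¹ i < σ⁻¹ ⟨(i:ℕ) + 1, h⟩ := lt_of_le_of_ne (not_lt.1 h1) h2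
    exact le_of_lt ((key_iff hs _ _).2 h3)

lemma good_of_mem {desc : ℕ → Prop} {σ : Equiv.Perm (Fin m)} {t : Fin m → ℝ}
    (ht : t ∈ region m desc) (hc : t ∈ chamber σ) : good m desc σ := by
  obtain ⟨-, hpat⟩ := ht
  obtain ⟨-, hs⟩ := hc
  have hinj : Function.Injective t := by
    have ht' : t = (t ∘ σ) ∘ σ.symm := by funext i; simp
    rw [ht']
    exact hs.injective.comp σ.symm.injective
  intro i h
  constructor
  · intro hlt
    by_contra hd
    have h1 : t i ≤ t ⟨(i:ℕ) + 1, h⟩ := (hpat i h).2 hd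
    have h2 : t ⟨(i:ℕ) + 1, h⟩ < t i := (key_iff hs _ _).2 hlt
    exact absurd h1 (not_le.2 h2)
  · intro hd
    have h1 : t ⟨(i:ℕ) + 1, h⟩ ≤ t i := (hpat i h).1 hd
    have h2 : t ⟨(i:ℕ) + 1, h⟩ ≠ t i := fun hc' => succ_ne h (hinj hc')
    exact (key_iff hs _ _).1 (lt_of_le_of_ne h1 h2)

lemma factorial_mul_volume_region (m : ℕ) (desc : ℕ → Prop) :
    (Nat.factorial m : ENNReal) * volume (region m desc) =
      (Nat.card {σ : Equiv.Perm (Fin m) // good m desc σ} : ENNReal) := by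
  classical
  have hreg : volume (region m desc) =
      volume (⋃ σ : {σ : Equiv.Perm (Fin m) // good m desc σ}, chamber σ.1) := by
    apply le_antisymm
    · have hsub : region m desc ⊆
          (⋃ σ : {σ : Equiv.Perm (Fin m) // good m desc σ}, chamber σ.1) ∪ badset m := by
        intro t ht
        rcases cube_subset_union ht.1 with h | h
        · obtain ⟨σ, hσ⟩ := Set.mem_iUnion.1 h
          exact Or.inl (Set.mem_iUnion.2 ⟨⟨σ, good_of_mem ht hσ⟩, hσ⟩)
        · exact Or.inr h
      calc volume (region m desc)
          ≤ volume ((⋃ σ : {σ : Equiv.Perm (Fin m) // good m desc σ}, chamber σ.1) ∪ badset m) :=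
            measure_mono hsub
        _ ≤ volume (⋃ σ : {σ : Equiv.Perm (Fin m) // good m desc σ}, chamber σ.1)
              + volume (badset m) := measure_union_le _ _
        _ = volume (⋃ σ : {σ : Equiv.Perm (Fin m) // good m desc σ}, chamber σ.1) := by
            rw [volume_badset, add_zero]
    · exact measure_mono (Set.iUnion_subset fun σ => chamber_subset_region σ.2)
  rw [hreg, measure_iUnion
    (fun a b hab => chamber_disjoint (fun h' => hab (Subtype.ext h')))
    (fun σ => measurableSet_chamber _), tsum_fintype,
    Finset.sum_congr rfl (fun σ _ => volume_chamber_eq σ.1), Finset.sum_const,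
    Finset.card_univ, nsmul_eq_mul, Nat.card_eq_fintype_card]
  rw [← mul_assoc, mul_comm (Nat.factorial m : ENNReal) _, mul_assoc,
    factorial_mul_volume_chamber_one, mul_one]

section Main

variable (m : ℕ) (d : ℕ → ℕ)

/-- The translation vector. -/
noncomputable def cvec (m : ℕ) (d : ℕ → ℕ) : Fin m → ℝ :=
  fun i => if (i:ℕ) = 0 then 0 else ((d ((i:ℕ) + 1) : ℝ) - (d (i:ℕ) : ℝ))

/-- The difference matrix. -/
def dmat (m : ℕ) : Matrix (Fin m) (Fin m) ℝ :=
  Matrix.of fun i j => if i = j then 1 else if (j:ℕ) + 1 = (i:ℕ) then -1 else 0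

lemma dmat_det : (dmat m).det = 1 := by
  rw [Matrix.det_of_lowerTriangular (dmat m) ?h]
  · simp [dmat]
  · intro i j hij
    have hij' : (i:ℕ) < (j:ℕ) := hij
    have h1 : i ≠ j := by intro h; subst h; exact lt_irrefl _ hij'
    have h2 : (j:ℕ) + 1 ≠ (i:ℕ) := by omega
    simp [dmat, h1, h2]

lemma dmat_mulVec_zero (t : Fin m → ℝ) (h0 : 0 < m) :
    (dmat m).mulVec t ⟨0, h0⟩ = t ⟨0, h0⟩ := by
  have hterm : ∀ j : Fin m, dmat m ⟨0, h0⟩ j * t j = if j = ⟨0, h0⟩ then t j else 0 := by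
    intro j
    by_cases hj : j = (⟨0, h0⟩ : Fin m)
    · subst hj; simp [dmat]
    · have h1 : (⟨0, h0⟩ : Fin m) ≠ j := Ne.symm hj
      have h2 : (j:ℕ) + 1 ≠ ((⟨0, h0⟩ : Fin m) : ℕ) := by simp
      rw [if_neg hj]
      simp [dmat, h1, h2]
  rw [Matrix.mulVec, dotProduct, Finset.sum_congr rfl fun j _ => hterm j,
    Finset.sum_ite_eq' Finset.univ _ t, if_pos (Finset.mem_univ _)]

lemma dmat_mulVec_succ (t : Fin m → ℝ) (k : ℕ) (hk : k + 1 < m) :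
    (dmat m).mulVec t ⟨k + 1, hk⟩ = t ⟨k + 1, hk⟩ - t ⟨k, by omega⟩ := by
  have hkm : k < m := by omega
  have hne : (⟨k + 1, hk⟩ : Fin m) ≠ ⟨k, hkm⟩ := by simp [Fin.ext_iff]
  have hterm : ∀ j : Fin m, dmat m ⟨k + 1, hk⟩ j * t j =
      (if j = ⟨k + 1, hk⟩ then t j else 0) + (if j = ⟨k, hkm⟩ then -t j else 0) := by
    intro j
    by_cases hj : j = (⟨k + 1, hk⟩ : Fin m)
    · subst hj
      simp [dmat, hne]
    · by_cases hj' : j = (⟨k, hkm⟩ : Fin m)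
      · subst hj'
        have h1 : (⟨k + 1, hk⟩ : Fin m) ≠ (⟨k, hkm⟩ : Fin m) := hne
        rw [if_neg hj, if_pos rfl]
        simp [dmat, h1.symm, h1]
      · have h1 : (⟨k + 1, hk⟩ : Fin m) ≠ j := Ne.symm hj
        have h2 : (j:ℕ) + 1 ≠ ((⟨k + 1, hk⟩ : Fin m) : ℕ) := by
          simp only []
          intro hh
          apply hj'
          simp [Fin.ext_iff]
          omega
        rw [if_neg hj, if_neg hj']
        have h2' : (j:ℕ) ≠ k := fun hh => hj' (Fin.ext hh)
        simp [dmat, h1, h2, h2']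
  rw [Matrix.mulVec, dotProduct, Finset.sum_congr rfl fun j _ => hterm j,
    Finset.sum_add_distrib, Finset.sum_ite_eq' Finset.univ _ t,
    Finset.sum_ite_eq' Finset.univ _ (fun j => -t j), if_pos (Finset.mem_univ _),
    if_pos (Finset.mem_univ _)]
  ring

/-- The affine transformation. -/
noncomputable def tmap (m : ℕ) (d : ℕ → ℕ) : (Fin m → ℝ) → Fin m → ℝ :=
  fun t => (dmat m).mulVec t + cvec m d

lemma tmap_measurePreserving : MeasurePreserving (tmap m d) volume volume := by
  have hL : MeasurePreserving (fun t : Fin m → ℝ => (dmat m).mulVec t) volume volume := by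
    have h1 : (fun t : Fin m → ℝ => (dmat m).mulVec t) = ⇑(Matrix.toLin' (dmat m)) := by
      funext t; rw [Matrix.toLin'_apply]
    rw [h1]
    refine ⟨(Matrix.toLin' (dmat m)).continuous_on_pi.measurable, ?_⟩
    rw [Real.map_linearMap_volume_pi_eq_smul_volume_pi, LinearMap.det_toLin', dmat_det]
    · simp
    · rw [LinearMap.det_toLin', dmat_det]; norm_num
  have hcomp : tmap m d = (fun x => x + cvec m d) ∘ (fun t => (dmat m).mulVec t) := rfl
  rw [hcomp]
  exact (measurePreserving_add_right volume (cvec m d)).comp hL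

lemma tmap_zero (t : Fin m → ℝ) (h0 : 0 < m) (hd1 : d 1 = 0) :
    tmap m d t ⟨0, h0⟩ = t ⟨0, h0⟩ := by
  simp [tmap, dmat_mulVec_zero, cvec]

lemma tmap_succ (t : Fin m → ℝ) (k : ℕ) (hk : k + 1 < m) :
    tmap m d t ⟨k + 1, hk⟩ =
      t ⟨k + 1, hk⟩ - t ⟨k, by omega⟩ + ((d (k + 2) : ℝ) - (d (k + 1) : ℝ)) := by
  have : tmap m d t ⟨k + 1, hk⟩ = (dmat m).mulVec t ⟨k + 1, hk⟩ + cvec m d ⟨k + 1, hk⟩ := rfl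
  rw [this, dmat_mulVec_succ m t k hk]
  simp [cvec]

lemma tmap_sum (t : Fin m → ℝ) (hd1 : d 1 = 0) (k : ℕ) (hk : k < m) :
    ∑ j ∈ Finset.univ.filter (fun j : Fin m => (j : ℕ) < k + 1), tmap m d t j
      = t ⟨k, hk⟩ + (d (k + 1) : ℝ) := by
  induction k with
  | zero =>
    have hfilter : Finset.univ.filter (fun j : Fin m => (j : ℕ) < 1) = {⟨0, hk⟩} := by
      ext j; simp [Fin.ext_iff] <;> omega
    rw [hfilter, Finset.sum_singleton, tmap_zero m d t hk hd1, hd1]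
    norm_num
  | succ k ih =>
    have hk' : k < m := by omega
    have hfilter : Finset.univ.filter (fun j : Fin m => (j : ℕ) < k + 2) =
        insert (⟨k + 1, hk⟩ : Fin m) (Finset.univ.filter fun j : Fin m => (j : ℕ) < k + 1) := by
      ext j; simp [Fin.ext_iff] <;> omega
    rw [hfilter, Finset.sum_insert (by simp), ih hk', tmap_succ m d t k hk]
    push_cast
    ring

end Main

lemma main (m : ℕ) (hm : 1 ≤ m) (d : ℕ → ℕ) (hd1 : d 1 = 0)
    (hdstep : ∀ i, d (i + 1) = d i ∨ d (i + 1) = d i + 1) :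
    (Nat.factorial m : ENNReal) *
      volume {x : Fin m → ℝ | (∀ i, 0 ≤ x i ∧ x i ≤ 1) ∧
        ∀ i, 1 ≤ i → i ≤ m →
          (d i : ℝ) ≤ ∑ j ∈ Finset.univ.filter (fun j : Fin m => (j : ℕ) < i), x j ∧
          ∑ j ∈ Finset.univ.filter (fun j : Fin m => (j : ℕ) < i), x j ≤ (d i : ℝ) + 1}
    = (Nat.card {w : Equiv.Perm (Fin m) //
        ∀ (i : Fin m) (h : (i : ℕ) + 1 < m),
          (w⁻¹ ⟨(i : ℕ) + 1, h⟩ < w⁻¹ i ↔ d ((i : ℕ) + 2) = d ((i : ℕ) + 1) + 1)} : ENNReal) := by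
  classical
  have hPmeas : MeasurableSet {x : Fin m → ℝ | (∀ i, 0 ≤ x i ∧ x i ≤ 1) ∧
      ∀ i, 1 ≤ i → i ≤ m →
        (d i : ℝ) ≤ ∑ j ∈ Finset.univ.filter (fun j : Fin m => (j : ℕ) < i), x j ∧
        ∑ j ∈ Finset.univ.filter (fun j : Fin m => (j : ℕ) < i), x j ≤ (d i : ℝ) + 1} := by
    have hrw : {x : Fin m → ℝ | (∀ i, 0 ≤ x i ∧ x i ≤ 1) ∧
        ∀ i, 1 ≤ i → i ≤ m →
          (d i : ℝ) ≤ ∑ j ∈ Finset.univ.filter (fun j : Fin m => (j : ℕ) < i), x j ∧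
          ∑ j ∈ Finset.univ.filter (fun j : Fin m => (j : ℕ) < i), x j ≤ (d i : ℝ) + 1} =
        cube m ∩ ⋂ (i : ℕ), ⋂ (_ : 1 ≤ i), ⋂ (_ : i ≤ m),
          ({x : Fin m → ℝ |
              (d i : ℝ) ≤ ∑ j ∈ Finset.univ.filter (fun j : Fin m => (j : ℕ) < i), x j} ∩
           {x : Fin m → ℝ |
              ∑ j ∈ Finset.univ.filter (fun j : Fin m => (j : ℕ) < i), x j ≤ (d i : ℝ) + 1}) := by
      ext x
      simp only [Set.mem_setOf_eq, Set.mem_inter_iff, Set.mem_iInter, cube]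
      try tauto
    rw [hrw]
    refine measurableSet_cube.inter (MeasurableSet.iInter fun i => MeasurableSet.iInter fun _ =>
      MeasurableSet.iInter fun _ => MeasurableSet.inter ?_ ?_)
    · exact measurableSet_le measurable_const
        (Finset.measurable_sum _ fun j _ => measurable_pi_apply j)
    · exact measurableSet_le
        (Finset.measurable_sum _ fun j _ => measurable_pi_apply j) measurable_const
  have hpre : tmap m d ⁻¹' {x : Fin m → ℝ | (∀ i, 0 ≤ x i ∧ x i ≤ 1) ∧
      ∀ i, 1 ≤ i → i ≤ m →
        (d i : ℝ) ≤ ∑ j ∈ Finset.univ.filter (fun j : Fin m => (j : ℕ) < i), x j ∧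
        ∑ j ∈ Finset.univ.filter (fun j : Fin m => (j : ℕ) < i), x j ≤ (d i : ℝ) + 1} =
      region m (fun k => d (k + 2) = d (k + 1) + 1) := by
    ext t
    simp only [Set.mem_preimage, Set.mem_setOf_eq, region, cube, Set.mem_inter_iff]
    constructor
    · rintro ⟨hbox, hsums⟩
      have hcube : ∀ i : Fin m, 0 ≤ t i ∧ t i ≤ 1 := by
        intro i
        have hs := hsums ((i : ℕ) + 1) (by omega) i.isLt
        rw [tmap_sum m d t hd1 (i : ℕ) i.isLt] at hs
        simp only [Fin.eta] at hs
        exact ⟨by linarith [hs.1], by linarith [hs.2]⟩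
      refine ⟨hcube, fun i h => ?_⟩
      have hb := hbox ⟨(i : ℕ) + 1, h⟩
      rw [tmap_succ m d t (i : ℕ) h] at hb
      simp only [Fin.eta] at hb
      rcases hdstep ((i : ℕ) + 1) with hstep | hstep
      · have hstep' : d ((i : ℕ) + 2) = d ((i : ℕ) + 1) := hstep
        constructor
        · intro hdsc
          exact absurd (show d ((i : ℕ) + 2) = d ((i : ℕ) + 1) + 1 from hdsc) (by omega)
        · intro _
          rw [hstep'] at hb
          have := hb.1
          linarith
      · have hstep' : d ((i : ℕ) + 2) = d ((i : ℕ) + 1) + 1 := hstep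
        constructor
        · intro _
          rw [hstep'] at hb
          have := hb.2
          push_cast at this
          linarith
        · intro hnd
          exact absurd hstep' hnd
    · rintro ⟨hcube, hpat⟩
      constructor
      · intro j
        obtain ⟨jv, hjlt⟩ := j
        cases jv with
        | zero =>
          rw [tmap_zero m d t hjlt hd1]
          exact hcube _
        | succ k =>
          rw [tmap_succ m d t k hjlt]
          have hk' : k < m := by omega
          have hp2 : (d (k + 2) = d (k + 1) + 1 → t ⟨k + 1, hjlt⟩ ≤ t ⟨k, hk'⟩) ∧
              (¬ d (k + 2) = d (k + 1) + 1 → t ⟨k, hk'⟩ ≤ t ⟨k + 1, hjlt⟩) := hpat ⟨k, hk'⟩ hjlt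
          have h1 : 0 ≤ t ⟨k, hk'⟩ ∧ t ⟨k, hk'⟩ ≤ 1 := hcube ⟨k, hk'⟩
          have h2 : 0 ≤ t ⟨k + 1, hjlt⟩ ∧ t ⟨k + 1, hjlt⟩ ≤ 1 := hcube ⟨k + 1, hjlt⟩
          rcases hdstep (k + 1) with hstep | hstep
          · have hstep' : d (k + 2) = d (k + 1) := hstep
            have hnd : ¬ d (k + 2) = d (k + 1) + 1 := by omega
            have h3 := hp2.2 hnd
            rw [hstep']
            constructor
            · linarith
            · linarith
          · have hstep' : d (k + 2) = d (k + 1) + 1 := hstep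
            have h3 := hp2.1 hstep'
            rw [hstep']
            push_cast
            constructor
            · linarith
            · linarith
      · intro i h1 h2
        obtain ⟨k, rfl⟩ : ∃ k, i = k + 1 := ⟨i - 1, by omega⟩
        have hk : k < m := by omega
        rw [tmap_sum m d t hd1 k hk]
        have h3 : 0 ≤ t ⟨k, hk⟩ ∧ t ⟨k, hk⟩ ≤ 1 := hcube ⟨k, hk⟩
        constructor
        · linarith [h3.1]
        · linarith [h3.2]
  have hv : volume {x : Fin m → ℝ | (∀ i, 0 ≤ x i ∧ x i ≤ 1) ∧
      ∀ i, 1 ≤ i → i ≤ m →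
        (d i : ℝ) ≤ ∑ j ∈ Finset.univ.filter (fun j : Fin m => (j : ℕ) < i), x j ∧
        ∑ j ∈ Finset.univ.filter (fun j : Fin m => (j : ℕ) < i), x j ≤ (d i : ℝ) + 1} =
      volume (region m (fun k => d (k + 2) = d (k + 1) + 1)) := by
    rw [← hpre]
    exact ((tmap_measurePreserving m d).measure_preimage hPmeas.nullMeasurableSet).symm
  rw [hv, factorial_mul_volume_region m (fun k => d (k + 2) = d (k + 1) + 1)]
  rfl

end BSP17

/-- the normalized volume (unit simplex has volume 1, i.e. Lebesgue volume
times `(n-1)!`) of the border strip matroid polytope `P(S(p))` — realized, after projecting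
out the last coordinate, as `{x ∈ [0,1]^{n-1} : d i ≤ x₁ + ⋯ + x_i ≤ d i + 1}` where
`d i` records the number of North steps among the first `i` boxes of the border strip —
equals `f_{S(p)}`, the number of standard Young tableaux of shape `S(p)`; equivalently, the
number of permutations `w` of `{1,…,n-1}` such that `w⁻¹` has a descent at position `i`
exactly when the `(i+1)`-st box of the strip lies above the `i`-th box
(i.e. `d (i+1) = d i + 1`). -/
theorem stmt17 (n : ℕ) (hn : 2 ≤ n) (d : ℕ → ℕ) (hd1 : d 1 = 0)
    (hdstep : ∀ i, d (i + 1) = d i ∨ d (i + 1) = d i + 1) :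
    ((n - 1).factorial : ENNReal) *
      volume {x : Fin (n - 1) → ℝ | (∀ i, 0 ≤ x i ∧ x i ≤ 1) ∧
        ∀ i, 1 ≤ i → i ≤ n - 1 →
          (d i : ℝ) ≤ ∑ j ∈ Finset.univ.filter (fun j : Fin (n - 1) => (j : ℕ) < i), x j ∧
          ∑ j ∈ Finset.univ.filter (fun j : Fin (n - 1) => (j : ℕ) < i), x j ≤ (d i : ℝ) + 1}
    = (Nat.card {w : Equiv.Perm (Fin (n - 1)) //
        ∀ (i : Fin (n - 1)) (h : (i : ℕ) + 1 < n - 1),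
          (w⁻¹ ⟨(i : ℕ) + 1, h⟩ < w⁻¹ i ↔ d ((i : ℕ) + 2) = d ((i : ℕ) + 1) + 1)} : ENNReal) :=
  BSP17.main (n - 1) (by omega) d hd1 hdstep
end

section
/- Stanley's map ψ: [0,1]^{n-1} → [0,1]^{n-1} defined by ψ(x_1,...,x_{n-1}) = (y_1,...,y_{n-1}) with y_i = (x_1+...+x_i) - ⌊x_1+...+x_i⌋ is piecewise-linear, volume-preserving, and bijective outside a set of measure zero; the simplices ψ^{-1}(∇_w) for w ∈ S_{n-1} with des(w^{-1}) = k-1 triangulate the hypersimplex Δ̃_{k,n} = {x ∈ [0,1]^{n-1} : k-1 ≤ Σx_i ≤ k} into unit simplices, hence the normalized volume of Δ̃_{k,n} equals the Eulerian number A_{k,n-1}. -/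
open Finset MeasureTheory

namespace Stmt18

variable {m : ℕ}

/-- partial sums -/
def psum (x : Fin m → ℝ) (i : Fin m) : ℝ :=
  ∑ j ∈ Finset.univ.filter (fun j : Fin m => j ≤ i), x j

def dsc (w : Equiv.Perm (Fin m)) (j : Fin m) : Prop :=
  ∃ h : (j : ℕ) + 1 < m, w⁻¹ ⟨(j : ℕ) + 1, h⟩ < w⁻¹ j

open Classical in
noncomputable def cnt (w : Equiv.Perm (Fin m)) (i : Fin m) : ℕ :=
  (Finset.univ.filter fun j : Fin m => (j : ℕ) < (i : ℕ) ∧ dsc w j).card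

def simplexSet (w : Equiv.Perm (Fin m)) : Set (Fin m → ℝ) :=
  {y | (∀ i, 0 < y (w i) ∧ y (w i) < 1) ∧ ∀ i j : Fin m, i < j → y (w i) < y (w j)}

lemma psum_zero (x : Fin m → ℝ) {i : Fin m} (h : (i : ℕ) = 0) : psum x i = x i := by
  unfold psum
  have : Finset.univ.filter (fun j : Fin m => j ≤ i) = {i} := by
    ext a
    simp only [Finset.mem_filter, Finset.mem_univ, true_and, Finset.mem_singleton]
    constructor
    · intro ha
      exact Fin.ext (by have := Fin.le_def.mp ha; omega)
    · rintro rfl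
      exact le_refl _
  rw [this, Finset.sum_singleton]

lemma psum_succ (x : Fin m → ℝ) {i j : Fin m} (h : (i : ℕ) + 1 = (j : ℕ)) :
    psum x j = psum x i + x j := by
  unfold psum
  have hij : j ∉ Finset.univ.filter (fun a : Fin m => a ≤ i) := by
    simp only [Finset.mem_filter, Finset.mem_univ, true_and]
    intro hc
    have := Fin.le_def.mp hc; omega
  have : Finset.univ.filter (fun a : Fin m => a ≤ j)
      = insert j (Finset.univ.filter (fun a : Fin m => a ≤ i)) := by
    ext a
    simp only [Finset.mem_filter, Finset.mem_univ, true_and, Finset.mem_insert]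
    rw [Fin.le_def, Fin.le_def]
    constructor
    · intro ha
      rcases eq_or_lt_of_le ha with h' | h'
      · exact Or.inl (Fin.ext h')
      · right; omega
    · rintro (rfl | ha)
      · exact le_refl _
      · omega
  rw [this, Finset.sum_insert hij, add_comm]

lemma psum_last (x : Fin m → ℝ) {i : Fin m} (h : (i : ℕ) + 1 = m) :
    psum x i = ∑ j, x j := by
  unfold psum
  congr 1
  rw [Finset.filter_true_of_mem]
  intro a _
  rw [Fin.le_def]
  omega

lemma psum_diff (x : Fin m → ℝ) {i j : Fin m} (h : (i : ℕ) + 1 = (j : ℕ)) :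
    x j = psum x j - psum x i := by
  rw [psum_succ x h]; ring

open Classical in
lemma cnt_zero (w : Equiv.Perm (Fin m)) {i : Fin m} (h : (i : ℕ) = 0) : cnt w i = 0 := by
  unfold cnt
  rw [Finset.card_eq_zero, Finset.filter_eq_empty_iff]
  intro a _
  rw [h]
  rintro ⟨h1, -⟩
  omega

open Classical in
lemma cnt_succ (w : Equiv.Perm (Fin m)) {i j : Fin m} (h : (i : ℕ) + 1 = (j : ℕ)) :
    (cnt w j : ℝ) = cnt w i + if dsc w i then 1 else 0 := by
  unfold cnt
  by_cases hd : dsc w i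
  · have hins : (Finset.univ.filter fun a : Fin m => (a : ℕ) < (j : ℕ) ∧ dsc w a)
        = insert i (Finset.univ.filter fun a : Fin m => (a : ℕ) < (i : ℕ) ∧ dsc w a) := by
      ext a
      simp only [Finset.mem_filter, Finset.mem_univ, true_and, Finset.mem_insert]
      constructor
      · rintro ⟨ha, hda⟩
        have ha' : (a : ℕ) ≤ (i : ℕ) := by omega
        rcases eq_or_lt_of_le ha' with h' | h'
        · exact Or.inl (Fin.ext h')
        · exact Or.inr ⟨h', hda⟩
      · rintro (rfl | ⟨ha, hda⟩)
        · exact ⟨by omega, hd⟩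
        · exact ⟨by omega, hda⟩
    rw [hins, Finset.card_insert_of_notMem (by simp), if_pos hd]
    push_cast; ring
  · have hins : (Finset.univ.filter fun a : Fin m => (a : ℕ) < (j : ℕ) ∧ dsc w a)
        = (Finset.univ.filter fun a : Fin m => (a : ℕ) < (i : ℕ) ∧ dsc w a) := by
      ext a
      simp only [Finset.mem_filter, Finset.mem_univ, true_and]
      constructor
      · rintro ⟨ha, hda⟩
        refine ⟨?_, hda⟩
        have ha' : (a : ℕ) ≤ (i : ℕ) := by omega
        rcases eq_or_lt_of_le ha' with h' | h'
        · exact absurd hda (by rwa [show a = i from Fin.ext h'])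
        · exact h'
      · rintro ⟨ha, hda⟩; exact ⟨by omega, hda⟩
    rw [hins, if_neg hd, add_zero]

open Classical in
lemma cnt_last (w : Equiv.Perm (Fin m)) {i : Fin m} (h : (i : ℕ) + 1 = m) :
    cnt w i = (Finset.univ.filter fun j : Fin m => dsc w j).card := by
  unfold cnt
  congr 1
  ext a
  simp only [Finset.mem_filter, Finset.mem_univ, true_and, and_iff_right_iff_imp]
  rintro ⟨h1, -⟩
  omega

lemma simplex_pos {w : Equiv.Perm (Fin m)} {y : Fin m → ℝ} (hy : y ∈ simplexSet w) (a : Fin m) :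
    0 < y a ∧ y a < 1 := by
  have := hy.1 (w⁻¹ a)
  rwa [Equiv.Perm.inv_def, Equiv.apply_symm_apply] at this

lemma simplex_lt_iff {w : Equiv.Perm (Fin m)} {y : Fin m → ℝ} (hy : y ∈ simplexSet w)
    (a b : Fin m) : y a < y b ↔ w⁻¹ a < w⁻¹ b := by
  constructor
  · intro hlt
    rcases lt_trichotomy (w⁻¹ a) (w⁻¹ b) with h | h | h
    · exact h
    · exfalso; rw [show a = b from by simpa using congrArg w h] at hlt; exact lt_irrefl _ hlt
    · exfalso
      have := hy.2 _ _ h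
      rw [Equiv.Perm.inv_def, Equiv.apply_symm_apply, Equiv.apply_symm_apply] at this
      exact absurd hlt (not_lt.mpr this.le)
  · intro h
    have := hy.2 _ _ h
    rwa [Equiv.Perm.inv_def, Equiv.apply_symm_apply, Equiv.apply_symm_apply] at this


/-- an int strictly between -1 and 1 is 0, etc (inline). -/

lemma floor_psum {w : Equiv.Perm (Fin m)} {x : Fin m → ℝ} (hx : ∀ i, 0 ≤ x i ∧ x i ≤ 1)
    (hy : (fun i => Int.fract (psum x i)) ∈ simplexSet w) (i : Fin m) :
    ⌊psum x i⌋ = cnt w i := by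
  have hpos : ∀ a : Fin m, 0 < Int.fract (psum x a) ∧ Int.fract (psum x a) < 1 :=
    fun a => simplex_pos hy a
  suffices H : ∀ t : ℕ, ∀ ht : t < m, ⌊psum x ⟨t, ht⟩⌋ = cnt w ⟨t, ht⟩ by
    have := H i.1 i.2
    simpa using this
  intro t
  induction t with
  | zero =>
    intro ht
    set i0 : Fin m := ⟨0, ht⟩
    rw [cnt_zero w (by rfl), psum_zero x (by rfl)]
    have h1 := (hx i0).1
    have h2 := (hx i0).2
    rcases eq_or_lt_of_le h2 with h2' | h2'
    · exfalso
      have : Int.fract (psum x i0) = 0 := by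
        rw [psum_zero x (by rfl), h2']
        simp
      exact absurd this (ne_of_gt (hpos i0).1)
    · exact Int.floor_eq_zero_iff.mpr ⟨h1, h2'⟩
  | succ t ih =>
    intro ht
    have htm : t < m := by omega
    set ip : Fin m := ⟨t, htm⟩
    set ic : Fin m := ⟨t + 1, ht⟩
    have hstep : (ip : ℕ) + 1 = (ic : ℕ) := rfl
    have hps : psum x ic = psum x ip + x ic := psum_succ x hstep
    have hIH : ⌊psum x ip⌋ = cnt w ip := ih htm
    have hfr : ∀ a : Fin m, Int.fract (psum x a) = psum x a - ⌊psum x a⌋ := fun a => rfl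
    have hcnt := cnt_succ w hstep
    have hxi := hx ic
    have hyc := hpos ic
    have hyp := hpos ip
    by_cases hd : dsc w ip
    · -- descent: y ic < y ip
      obtain ⟨hlt, hwlt⟩ := hd
      have hidx : (⟨(ip : ℕ) + 1, hlt⟩ : Fin m) = ic := rfl
      rw [hidx] at hwlt
      have hylt : Int.fract (psum x ic) < Int.fract (psum x ip) :=
        (simplex_lt_iff hy ic ip).mpr hwlt
      have hd1 : ⌊psum x ic⌋ - ⌊psum x ip⌋ = 1 := by
        have e1 : ((⌊psum x ic⌋ - ⌊psum x ip⌋ : ℤ) : ℝ)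
            = x ic - (Int.fract (psum x ic) - Int.fract (psum x ip)) := by
          rw [hfr, hfr]
          push_cast
          rw [hps]
          ring
        have h0 : (0:ℝ) < ((⌊psum x ic⌋ - ⌊psum x ip⌋ : ℤ) : ℝ) := by
          rw [e1]; nlinarith [hxi.1, hylt, hyp.2, hyc.1]
        have h2 : ((⌊psum x ic⌋ - ⌊psum x ip⌋ : ℤ) : ℝ) < 2 := by
          rw [e1]; nlinarith [hxi.2, hylt, hyp.2, hyc.1]
        have h0' : (0:ℤ) < ⌊psum x ic⌋ - ⌊psum x ip⌋ := by exact_mod_cast h0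
        have h2' : (⌊psum x ic⌋ - ⌊psum x ip⌋ : ℤ) < 2 := by exact_mod_cast h2
        omega
      have : (⌊psum x ic⌋ : ℝ) = (cnt w ic : ℝ) := by
        rw [hcnt, if_pos ⟨hlt, hwlt⟩]
        have : ⌊psum x ic⌋ = cnt w ip + 1 := by omega
        rw [this]; push_cast; ring
      exact_mod_cast this
    · -- ascent
      have hlt : (ip : ℕ) + 1 < m := ht
      have hne : w⁻¹ ic ≠ w⁻¹ ip := by
        intro hcon
        have : ic = ip := by simpa using congrArg w hcon
        exact absurd (congrArg Fin.val this) (by simp [ic, ip])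
      have hwgt : w⁻¹ ip < w⁻¹ ic := by
        rcases lt_or_gt_of_ne hne with h' | h'
        · exact absurd ⟨hlt, h'⟩ hd
        · exact h'
      have hylt : Int.fract (psum x ip) < Int.fract (psum x ic) :=
        (simplex_lt_iff hy ip ic).mpr hwgt
      have hd0 : ⌊psum x ic⌋ - ⌊psum x ip⌋ = 0 := by
        have e1 : ((⌊psum x ic⌋ - ⌊psum x ip⌋ : ℤ) : ℝ)
            = x ic - (Int.fract (psum x ic) - Int.fract (psum x ip)) := by
          rw [hfr, hfr]
          push_cast
          rw [hps]
          ring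
        have h0 : (-1:ℝ) < ((⌊psum x ic⌋ - ⌊psum x ip⌋ : ℤ) : ℝ) := by
          rw [e1]; nlinarith [hxi.1, hylt, hyp.1, hyc.2]
        have h2 : ((⌊psum x ic⌋ - ⌊psum x ip⌋ : ℤ) : ℝ) < 1 := by
          rw [e1]; nlinarith [hxi.2, hylt, hyp.1, hyc.2]
        have h0' : (-1:ℤ) < ⌊psum x ic⌋ - ⌊psum x ip⌋ := by exact_mod_cast h0
        have h2' : (⌊psum x ic⌋ - ⌊psum x ip⌋ : ℤ) < 1 := by exact_mod_cast h2
        omega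
      have : (⌊psum x ic⌋ : ℝ) = (cnt w ic : ℝ) := by
        rw [hcnt, if_neg hd]
        have : ⌊psum x ic⌋ = cnt w ip := by omega
        rw [this]; push_cast; ring
      exact_mod_cast this

lemma affine_mem_imp {w : Equiv.Perm (Fin m)} {x : Fin m → ℝ}
    (hy : (fun i => psum x i - (cnt w i : ℝ)) ∈ simplexSet w) :
    (∀ i, 0 ≤ x i ∧ x i ≤ 1) ∧ (fun i => Int.fract (psum x i)) ∈ simplexSet w := by
  set y : Fin m → ℝ := fun i => psum x i - (cnt w i : ℝ) with hydef
  have hpos : ∀ a : Fin m, 0 < y a ∧ y a < 1 := fun a => simplex_pos hy a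
  have hfr : ∀ a : Fin m, Int.fract (psum x a) = y a := by
    intro a
    have : psum x a = y a + ((cnt w a : ℤ) : ℝ) := by simp [hydef]
    rw [this, Int.fract_add_intCast, Int.fract_eq_self.mpr ⟨(hpos a).1.le, (hpos a).2⟩]
  have hcube : ∀ i, 0 ≤ x i ∧ x i ≤ 1 := by
    intro i
    rcases Nat.eq_zero_or_eq_succ_pred (i : ℕ) with h0 | hs
    · have : x i = y i := by
        rw [hydef]
        simp only
        rw [psum_zero x h0, cnt_zero w h0]
        push_cast; ring
      rw [this]
      exact ⟨(hpos i).1.le, (hpos i).2.le⟩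
    · set t : ℕ := (i : ℕ) - 1 with htdef
      have hti : t + 1 = (i : ℕ) := by omega
      have htm : t < m := by omega
      set ip : Fin m := ⟨t, htm⟩
      have hstep : (ip : ℕ) + 1 = (i : ℕ) := hti
      have hxeq : x i = y i - y ip + ((cnt w i : ℝ) - (cnt w ip : ℝ)) := by
        rw [psum_diff x hstep]
        simp only [hydef]
        ring
      have hcnt := cnt_succ w hstep
      by_cases hd : dsc w ip
      · obtain ⟨hlt, hwlt0⟩ := hd
        have hidx : (⟨(ip : ℕ) + 1, hlt⟩ : Fin m) = i := Fin.ext hstep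
        have hwlt : w⁻¹ i < w⁻¹ ip := hidx ▸ hwlt0
        have hylt : y i < y ip := (simplex_lt_iff hy i ip).mpr hwlt
        have hc : (cnt w i : ℝ) - (cnt w ip : ℝ) = 1 := by
          rw [hcnt, if_pos ⟨hlt, hwlt0⟩]; ring
        rw [hxeq, hc]
        constructor
        · nlinarith [(hpos i).1, (hpos ip).2]
        · nlinarith [hylt]
      · have hlt : (ip : ℕ) + 1 < m := by rw [hstep]; exact i.2
        have hne : w⁻¹ i ≠ w⁻¹ ip := by
          intro hcon
          have : i = ip := by simpa using congrArg w hcon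
          have := congrArg Fin.val this
          simp only [ip] at this
          omega
        have hwgt : w⁻¹ ip < w⁻¹ i := by
          rcases lt_or_gt_of_ne hne with h' | h'
          · refine absurd ?_ hd
            refine ⟨hlt, ?_⟩
            have hidx : (⟨(ip : ℕ) + 1, hlt⟩ : Fin m) = i := Fin.ext hstep
            rw [hidx]
            exact h'
          · exact h'
        have hylt : y ip < y i := (simplex_lt_iff hy ip i).mpr hwgt
        have hc : (cnt w i : ℝ) - (cnt w ip : ℝ) = 0 := by
          rw [hcnt, if_neg hd]; ring
        rw [hxeq, hc]
        constructor
        · nlinarith [hylt]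
        · nlinarith [(hpos ip).1, (hpos i).2]
  refine ⟨hcube, ?_⟩
  have : (fun i => Int.fract (psum x i)) = y := funext hfr
  rw [this]
  exact hy

lemma mem_T_iff {w : Equiv.Perm (Fin m)} {x : Fin m → ℝ} :
    ((∀ i, 0 ≤ x i ∧ x i ≤ 1) ∧ (fun i => Int.fract (psum x i)) ∈ simplexSet w)
      ↔ (fun i => psum x i - (cnt w i : ℝ)) ∈ simplexSet w := by
  constructor
  · rintro ⟨hx, hy⟩
    have he : (fun i => Int.fract (psum x i)) = (fun i => psum x i - (cnt w i : ℝ)) := by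
      funext i
      rw [Int.fract, floor_psum hx hy i]
      push_cast; ring
    rwa [he] at hy
  · exact affine_mem_imp


lemma simplex_inj {w : Equiv.Perm (Fin m)} {y : Fin m → ℝ} (hy : y ∈ simplexSet w) :
    Function.Injective y := by
  intro a b hab
  by_contra hne
  have h1 : w⁻¹ a ≠ w⁻¹ b := fun hc => hne (by simpa using congrArg w hc)
  rcases lt_or_gt_of_ne h1 with h' | h'
  · have := (simplex_lt_iff hy a b).mpr h'
    rw [hab] at this; exact lt_irrefl _ this
  · have := (simplex_lt_iff hy b a).mpr h'
    rw [hab] at this; exact lt_irrefl _ this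

lemma simplex_disjoint {w w' : Equiv.Perm (Fin m)} (h : w ≠ w') :
    Disjoint (simplexSet w) (simplexSet w') := by
  rw [Set.disjoint_left]
  intro y hw hw'
  apply h
  have hmono : Monotone (y ∘ w) := by
    intro a b hab
    rcases eq_or_lt_of_le hab with rfl | h'
    · exact le_refl _
    · exact (hw.2 a b h').le
  have hmono' : Monotone (y ∘ w') := by
    intro a b hab
    rcases eq_or_lt_of_le hab with rfl | h'
    · exact le_refl _
    · exact (hw'.2 a b h').le
  have := Tuple.unique_monotone hmono hmono'
  ext a
  exact Fin.val_eq_val _ _ |>.mpr (simplex_inj hw (congrFun this a)) ▸ rfl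

lemma exists_simplex_mem {y : Fin m → ℝ} (h01 : ∀ i, 0 < y i ∧ y i < 1)
    (hinj : Function.Injective y) : ∃ w : Equiv.Perm (Fin m), y ∈ simplexSet w := by
  refine ⟨Tuple.sort y, fun i => h01 _, fun i j hij => ?_⟩
  have hmono := Tuple.monotone_sort y
  have hle : y (Tuple.sort y i) ≤ y (Tuple.sort y j) := hmono hij.le
  rcases eq_or_lt_of_le hle with h' | h'
  · exact absurd ((Equiv.injective _).eq_iff.mp (hinj h')) (ne_of_lt hij)
  · exact h'

/-- Hyperplanes are null. -/
lemma null_of_linear {l : (Fin m → ℝ) →ₗ[ℝ] ℝ} (hl : l ≠ 0) (c : ℝ) :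
    volume {x : Fin m → ℝ | l x = c} = 0 := by
  obtain ⟨v, hv⟩ : ∃ v, l v ≠ 0 := by
    by_contra hc
    push_neg at hc
    exact hl (LinearMap.ext fun v => by rw [hc v]; rfl)
  set x0 : Fin m → ℝ := (c / l v) • v with hx0
  have hlx0 : l x0 = c := by
    rw [hx0, LinearMap.map_smul, smul_eq_mul, div_mul_cancel₀ _ hv]
  have hset : {x : Fin m → ℝ | l x = c} = (fun z => z + (-x0)) ⁻¹' (LinearMap.ker l : Set _) := by
    ext z
    simp only [Set.mem_setOf_eq, Set.mem_preimage, SetLike.mem_coe, LinearMap.mem_ker,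
      map_add, map_neg, hlx0]
    constructor
    · intro h; rw [h]; ring
    · intro h; linarith
  rw [hset, measure_preimage_add_right]
  refine Measure.addHaar_submodule volume (LinearMap.ker l) ?_
  intro hc
  rw [LinearMap.ker_eq_top] at hc
  exact hl hc

lemma psum_linear (i : Fin m) :
    ∃ l : (Fin m → ℝ) →ₗ[ℝ] ℝ, (∀ x, l x = psum x i) ∧
      ∀ a : Fin m, l (Pi.single a 1) = if a ≤ i then 1 else 0 := by
  classical
  refine ⟨∑ j ∈ Finset.univ.filter (fun j : Fin m => j ≤ i), LinearMap.proj j, fun x => ?_, fun a => ?_⟩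
  · rw [LinearMap.sum_apply]
    rfl
  · rw [LinearMap.sum_apply]
    have : ∀ j : Fin m, (LinearMap.proj j : (Fin m → ℝ) →ₗ[ℝ] ℝ) (Pi.single a 1)
        = if j = a then 1 else 0 := by
      intro j
      simp [LinearMap.proj_apply, Pi.single_apply]
    simp_rw [this]
    rw [Finset.sum_ite_eq' _ a (fun _ => (1:ℝ))]
    simp

lemma null_psum_eq (i : Fin m) (c : ℝ) : volume {x : Fin m → ℝ | psum x i = c} = 0 := by
  obtain ⟨l, hl, hs⟩ := psum_linear i
  have hne : l ≠ 0 := by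
    intro hc
    have := hs i
    rw [hc] at this
    simp at this
  have : {x : Fin m → ℝ | psum x i = c} = {x | l x = c} := by
    ext x; simp [hl]
  rw [this]
  exact null_of_linear hne c

lemma null_psum_sub (i j : Fin m) (hij : i ≠ j) (c : ℝ) :
    volume {x : Fin m → ℝ | psum x i - psum x j = c} = 0 := by
  obtain ⟨l1, hl1, hs1⟩ := psum_linear i
  obtain ⟨l2, hl2, hs2⟩ := psum_linear j
  have hne : l1 - l2 ≠ 0 := by
    intro hc
    rcases lt_or_gt_of_ne hij with h' | h'
    · have := congrArg (fun f : (Fin m → ℝ) →ₗ[ℝ] ℝ => f (Pi.single j 1)) hc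
      simp only [LinearMap.sub_apply, LinearMap.zero_apply, hs1, hs2] at this
      rw [if_neg (by exact fun hc2 => absurd (lt_of_le_of_lt hc2 h') (lt_irrefl j)), if_pos (le_refl j)] at this
      norm_num at this
    · have := congrArg (fun f : (Fin m → ℝ) →ₗ[ℝ] ℝ => f (Pi.single i 1)) hc
      simp only [LinearMap.sub_apply, LinearMap.zero_apply, hs1, hs2] at this
      rw [if_pos (le_refl i), if_neg (by exact fun hc2 => absurd (lt_of_le_of_lt hc2 h') (lt_irrefl i))] at this
      norm_num at this
  have : {x : Fin m → ℝ | psum x i - psum x j = c} = {x | (l1 - l2) x = c} := by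
    ext x; simp [hl1, hl2]
  rw [this]
  exact null_of_linear hne c

lemma null_eval (i : Fin m) (c : ℝ) : volume {y : Fin m → ℝ | y i = c} = 0 := by
  have hne : (LinearMap.proj i : (Fin m → ℝ) →ₗ[ℝ] ℝ) ≠ 0 := by
    intro hc
    have := congrArg (fun f : (Fin m → ℝ) →ₗ[ℝ] ℝ => f (Pi.single i 1)) hc
    simpa using this
  exact null_of_linear hne c

lemma null_eval_eq (i j : Fin m) (hij : i ≠ j) : volume {y : Fin m → ℝ | y i = y j} = 0 := by
  set l : (Fin m → ℝ) →ₗ[ℝ] ℝ :=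
    (LinearMap.proj i : (Fin m → ℝ) →ₗ[ℝ] ℝ) - (LinearMap.proj j : (Fin m → ℝ) →ₗ[ℝ] ℝ) with hldef
  have hne : l ≠ 0 := by
    intro hc
    have := congrArg (fun f : (Fin m → ℝ) →ₗ[ℝ] ℝ => f (Pi.single i 1)) hc
    simp only [hldef, LinearMap.sub_apply, LinearMap.zero_apply, LinearMap.proj_apply] at this
    rw [Pi.single_eq_same, Pi.single_eq_of_ne (Ne.symm hij)] at this
    norm_num at this
  have : {y : Fin m → ℝ | y i = y j} = {y | l y = 0} := by
    ext y
    simp only [hldef, Set.mem_setOf_eq, LinearMap.sub_apply, LinearMap.proj_apply, sub_eq_zero]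
  rw [this]
  exact null_of_linear hne 0


/-- The lower-triangular partial-sum matrix. -/
def Lmat (m : ℕ) : Matrix (Fin m) (Fin m) ℝ := fun i j => if j ≤ i then 1 else 0

noncomputable def Lmap (m : ℕ) : (Fin m → ℝ) →ₗ[ℝ] (Fin m → ℝ) := Matrix.toLin' (Lmat m)

lemma Lmap_apply (x : Fin m → ℝ) : Lmap m x = psum x := by
  funext i
  rw [Lmap, Matrix.toLin'_apply]
  show (Lmat m).mulVec x i = psum x i
  rw [Matrix.mulVec, dotProduct]
  rw [psum, Finset.sum_filter]
  congr 1
  funext j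
  rw [Lmat]
  split_ifs <;> simp

lemma Lmat_det : (Lmat m).det = 1 := by
  rw [Matrix.det_of_lowerTriangular (Lmat m) ?ht]
  · simp [Lmat]
  · intro i j hij
    rw [Lmat, if_neg]
    simp only [OrderDual.toDual_lt_toDual] at hij
    exact fun hc => absurd (lt_of_le_of_lt hc hij) (lt_irrefl _)

lemma Lmap_det : LinearMap.det (Lmap m) = 1 := by
  rw [Lmap, LinearMap.det_toLin', Lmat_det]

lemma Lmap_measurePreserving : MeasurePreserving (Lmap m) (volume : Measure (Fin m → ℝ)) volume := by
  refine ⟨(Lmap m).continuous_of_finiteDimensional.measurable, ?_⟩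
  rw [Real.map_linearMap_volume_pi_eq_smul_volume_pi (by rw [Lmap_det]; norm_num)]
  rw [Lmap_det]
  norm_num

lemma psum_injective {x x' : Fin m → ℝ} (h : psum x = psum x') : x = x' := by
  funext i
  rcases Nat.eq_zero_or_eq_succ_pred (i : ℕ) with h0 | hs
  · rw [← psum_zero x h0, ← psum_zero x' h0, h]
  · set t : ℕ := (i : ℕ) - 1 with htdef
    have hti : t + 1 = (i : ℕ) := by omega
    have htm : t < m := by omega
    set ip : Fin m := ⟨t, htm⟩
    have hstep : (ip : ℕ) + 1 = (i : ℕ) := hti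
    rw [psum_diff x hstep, psum_diff x' hstep, h]

/-- The affine map associated with `w`. -/
noncomputable def aff (w : Equiv.Perm (Fin m)) (x : Fin m → ℝ) : Fin m → ℝ :=
  fun i => psum x i - (cnt w i : ℝ)

lemma aff_eq (w : Equiv.Perm (Fin m)) :
    aff w = (fun y : Fin m → ℝ => y - fun i => (cnt w i : ℝ)) ∘ (Lmap m) := by
  funext x i
  simp [aff, Lmap_apply, Pi.sub_apply]

lemma aff_measurePreserving (w : Equiv.Perm (Fin m)) :
    MeasurePreserving (aff w) (volume : Measure (Fin m → ℝ)) volume := by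
  rw [aff_eq]
  exact (measurePreserving_sub_right volume _).comp Lmap_measurePreserving

lemma aff_injective (w : Equiv.Perm (Fin m)) : Function.Injective (aff w) := by
  rw [aff_eq]
  refine (sub_left_injective).comp ?_
  intro x x' h
  rw [Lmap_apply, Lmap_apply] at h
  exact psum_injective h

lemma simplexSet_measurable (w : Equiv.Perm (Fin m)) : MeasurableSet (simplexSet w) := by
  have : simplexSet w = (⋂ i, ({y : Fin m → ℝ | 0 < y (w i)} ∩ {y | y (w i) < 1}))
      ∩ ⋂ i, ⋂ j, {y : Fin m → ℝ | i < j → y (w i) < y (w j)} := by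
    ext y
    simp only [simplexSet, Set.mem_setOf_eq, Set.mem_inter_iff, Set.mem_iInter]
  rw [this]
  refine MeasurableSet.inter ?_ ?_
  · refine MeasurableSet.iInter fun i => MeasurableSet.inter ?_ ?_
    · exact measurableSet_lt measurable_const (measurable_pi_apply _)
    · exact measurableSet_lt (measurable_pi_apply _) measurable_const
  · refine MeasurableSet.iInter fun i => MeasurableSet.iInter fun j => ?_
    by_cases h : i < j
    · have : {y : Fin m → ℝ | i < j → y (w i) < y (w j)} = {y | y (w i) < y (w j)} := by
        ext y; simp [h]
      rw [this]
      exact measurableSet_lt (measurable_pi_apply _) (measurable_pi_apply _)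
    · have : {y : Fin m → ℝ | i < j → y (w i) < y (w j)} = Set.univ := by
        ext y; simp [h]
      rw [this]
      exact MeasurableSet.univ

lemma simplexSet_volume_eq (w : Equiv.Perm (Fin m)) :
    volume (simplexSet w) = volume (simplexSet (1 : Equiv.Perm (Fin m))) := by
  have hmp := volume_measurePreserving_piCongrLeft (fun _ : Fin m => ℝ) (w⁻¹ : Equiv.Perm (Fin m))
  have hpre : (MeasurableEquiv.piCongrLeft (fun _ : Fin m => ℝ) (w⁻¹ : Equiv.Perm (Fin m))) ⁻¹'
      (simplexSet (1 : Equiv.Perm (Fin m))) = simplexSet w := by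
    ext y
    have happ : ∀ i, (MeasurableEquiv.piCongrLeft (fun _ : Fin m => ℝ)
        (w⁻¹ : Equiv.Perm (Fin m))) y i = y (w i) := by
      intro i
      rw [MeasurableEquiv.coe_piCongrLeft]
      have h1 : (w⁻¹ : Equiv.Perm (Fin m)) (w i) = i := Equiv.Perm.inv_eq_iff_eq.mpr rfl
      conv_lhs => rw [← h1]
      exact Equiv.piCongrLeft_apply_apply (fun _ => ℝ) (w⁻¹ : Equiv.Perm (Fin m)) y (w i)
    simp only [Set.mem_preimage, simplexSet, Set.mem_setOf_eq]
    constructor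
    · rintro ⟨h1, h2⟩
      constructor
      · intro i
        have := h1 i
        rwa [Equiv.Perm.one_apply, happ] at this
      · intro i j hij
        have := h2 i j hij
        rwa [Equiv.Perm.one_apply, Equiv.Perm.one_apply, happ, happ] at this
    · rintro ⟨h1, h2⟩
      constructor
      · intro i
        rw [Equiv.Perm.one_apply, happ]
        exact h1 i
      · intro i j hij
        rw [Equiv.Perm.one_apply, Equiv.Perm.one_apply, happ, happ]
        exact h2 i j hij
  rw [← hpre]
  exact hmp.measure_preimage (simplexSet_measurable _).nullMeasurableSet


def cubeSet (m : ℕ) : Set (Fin m → ℝ) := {x | ∀ i, 0 ≤ x i ∧ x i ≤ 1}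

noncomputable def psifun (x : Fin m → ℝ) : Fin m → ℝ := fun i => Int.fract (psum x i)

lemma cubeSet_eq : cubeSet m = Set.pi Set.univ (fun _ : Fin m => Set.Icc (0:ℝ) 1) := by
  ext x
  rw [Set.mem_univ_pi]
  constructor
  · intro h i
    exact Set.mem_Icc.mpr ⟨(h i).1, (h i).2⟩
  · intro h i
    exact ⟨(Set.mem_Icc.mp (h i)).1, (Set.mem_Icc.mp (h i)).2⟩

lemma cubeSet_measurable : MeasurableSet (cubeSet m) := by
  rw [cubeSet_eq]
  exact MeasurableSet.univ_pi fun i => measurableSet_Icc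

lemma volume_cubeSet : volume (cubeSet m) = 1 := by
  rw [cubeSet_eq, volume_pi_pi]
  simp [Real.volume_Icc]

lemma psifun_measurable : Measurable (psifun : (Fin m → ℝ) → (Fin m → ℝ)) := by
  refine measurable_pi_lambda _ fun i => Measurable.fract ?_
  exact Finset.measurable_sum _ fun j _ => measurable_pi_apply j

def Bx (m : ℕ) : Set (Fin m → ℝ) :=
  (⋃ i : Fin m, ⋃ d : ℤ, {x | psum x i = (d : ℝ)}) ∪
    ⋃ i : Fin m, ⋃ j : Fin m, ⋃ d : ℤ, {x | i ≠ j ∧ psum x i - psum x j = (d : ℝ)}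

lemma Bx_null : volume (Bx m) = 0 := by
  refine measure_union_null ?_ ?_
  · refine measure_iUnion_null fun i => measure_iUnion_null fun d => null_psum_eq i (d : ℝ)
  · refine measure_iUnion_null fun i => measure_iUnion_null fun j =>
      measure_iUnion_null fun d => ?_
    by_cases h : i = j
    · subst h
      have : {x : Fin m → ℝ | i ≠ i ∧ psum x i - psum x i = (d : ℝ)} = ∅ := by
        ext x; simp
      rw [this]; simp
    · exact measure_mono_null (fun x hx => hx.2) (null_psum_sub i j h (d : ℝ))

lemma claimA {x : Fin m → ℝ} (hx : x ∉ Bx m) :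
    (∀ i, 0 < psifun x i ∧ psifun x i < 1) ∧ Function.Injective (psifun x) := by
  constructor
  · intro i
    refine ⟨?_, Int.fract_lt_one _⟩
    rcases eq_or_lt_of_le (Int.fract_nonneg (psum x i)) with h0 | h0
    · exfalso
      apply hx
      left
      refine Set.mem_iUnion.mpr ⟨i, Set.mem_iUnion.mpr ⟨⌊psum x i⌋, ?_⟩⟩
      have h1 : psum x i - (⌊psum x i⌋ : ℝ) = 0 := by
        rw [Int.self_sub_floor]
        linarith
      show psum x i = (⌊psum x i⌋ : ℝ)
      linarith
    · exact h0
  · intro i j hij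
    by_contra hne
    apply hx
    right
    refine Set.mem_iUnion.mpr ⟨i, Set.mem_iUnion.mpr ⟨j,
      Set.mem_iUnion.mpr ⟨⌊psum x i⌋ - ⌊psum x j⌋, hne, ?_⟩⟩⟩
    have h1 : Int.fract (psum x i) = Int.fract (psum x j) := hij
    rw [← Int.self_sub_floor, ← Int.self_sub_floor] at h1
    push_cast
    linarith

def By (m : ℕ) : Set (Fin m → ℝ) :=
  (⋃ i : Fin m, {y | y i = (0 : ℝ)}) ∪ (⋃ i : Fin m, {y | y i = (1 : ℝ)}) ∪
    ⋃ i : Fin m, ⋃ j : Fin m, {y | i ≠ j ∧ y i = y j}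

lemma By_null : volume (By m) = 0 := by
  refine measure_union_null (measure_union_null ?_ ?_) ?_
  · exact measure_iUnion_null fun i => null_eval i 0
  · exact measure_iUnion_null fun i => null_eval i 1
  · refine measure_iUnion_null fun i => measure_iUnion_null fun j => ?_
    by_cases h : i = j
    · subst h
      have : {y : Fin m → ℝ | i ≠ i ∧ y i = y i} = ∅ := by ext y; simp
      rw [this]; simp
    · exact measure_mono_null (fun y hy => hy.2) (null_eval_eq i j h)

lemma claimB {y : Fin m → ℝ} (hy : y ∈ cubeSet m) (hby : y ∉ By m) :
    ∃ w : Equiv.Perm (Fin m), y ∈ simplexSet w := by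
  apply exists_simplex_mem
  · intro i
    constructor
    · rcases eq_or_lt_of_le (hy i).1 with h0 | h0
      · exfalso
        exact hby (Or.inl (Or.inl (Set.mem_iUnion.mpr ⟨i, h0.symm⟩)))
      · exact h0
    · rcases eq_or_lt_of_le (hy i).2 with h0 | h0
      · exfalso
        exact hby (Or.inl (Or.inr (Set.mem_iUnion.mpr ⟨i, h0⟩)))
      · exact h0
  · intro i j hij
    by_contra hne
    exact hby (Or.inr (Set.mem_iUnion.mpr ⟨i, Set.mem_iUnion.mpr ⟨j, hne, hij⟩⟩))

lemma simplex_subset_cube (w : Equiv.Perm (Fin m)) : simplexSet w ⊆ cubeSet m :=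
  fun y hy i => ⟨(simplex_pos hy i).1.le, (simplex_pos hy i).2.le⟩

lemma volume_iUnion_simplex : volume (⋃ w : Equiv.Perm (Fin m), simplexSet w) = 1 := by
  apply le_antisymm
  · calc volume (⋃ w : Equiv.Perm (Fin m), simplexSet w) ≤ volume (cubeSet m) :=
          measure_mono (Set.iUnion_subset simplex_subset_cube)
      _ = 1 := volume_cubeSet
  · have hsub : cubeSet m ⊆ (⋃ w : Equiv.Perm (Fin m), simplexSet w) ∪ By m := by
      intro y hy
      by_cases hby : y ∈ By m
      · exact Or.inr hby
      · obtain ⟨w, hw⟩ := claimB hy hby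
        exact Or.inl (Set.mem_iUnion.mpr ⟨w, hw⟩)
    calc (1 : ENNReal) = volume (cubeSet m) := volume_cubeSet.symm
      _ ≤ volume ((⋃ w : Equiv.Perm (Fin m), simplexSet w) ∪ By m) := measure_mono hsub
      _ ≤ volume (⋃ w : Equiv.Perm (Fin m), simplexSet w) + volume (By m) := measure_union_le _ _
      _ = volume (⋃ w : Equiv.Perm (Fin m), simplexSet w) := by rw [By_null, add_zero]

lemma volume_simplex_norm (w : Equiv.Perm (Fin m)) :
    (m.factorial : ENNReal) * volume (simplexSet w) = 1 := by
  have hdisj : Pairwise (Function.onFun Disjoint fun w : Equiv.Perm (Fin m) => simplexSet w) :=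
    fun w w' h => simplex_disjoint h
  have hiu := measure_iUnion (μ := (volume : Measure (Fin m → ℝ))) hdisj
      fun w : Equiv.Perm (Fin m) => simplexSet_measurable w
  rw [volume_iUnion_simplex, tsum_fintype] at hiu
  have hconst : ∀ w' : Equiv.Perm (Fin m), volume (simplexSet w') = volume (simplexSet w) := by
    intro w'
    rw [simplexSet_volume_eq w', simplexSet_volume_eq w]
  rw [Finset.sum_congr rfl (fun w' _ => hconst w'), Finset.sum_const] at hiu
  rw [Finset.card_univ, Fintype.card_perm, Fintype.card_fin, nsmul_eq_mul] at hiu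
  exact hiu.symm


noncomputable def Tset (w : Equiv.Perm (Fin m)) : Set (Fin m → ℝ) :=
  cubeSet m ∩ psifun ⁻¹' simplexSet w

lemma psi_eq_aff {w : Equiv.Perm (Fin m)} {x : Fin m → ℝ} (hx : ∀ i, 0 ≤ x i ∧ x i ≤ 1)
    (hy : psifun x ∈ simplexSet w) : psifun x = aff w x := by
  funext i
  show Int.fract (psum x i) = psum x i - (cnt w i : ℝ)
  rw [← Int.self_sub_floor, floor_psum hx hy i]
  push_cast
  ring

lemma mem_Tset_iff {w : Equiv.Perm (Fin m)} {x : Fin m → ℝ} :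
    x ∈ Tset w ↔ aff w x ∈ simplexSet w := by
  constructor
  · rintro ⟨hx, hy⟩
    have heq := psi_eq_aff hx hy
    rw [← heq]
    exact hy
  · intro h
    obtain ⟨hx, hy⟩ := affine_mem_imp h
    exact ⟨hx, hy⟩

lemma Tset_eq (w : Equiv.Perm (Fin m)) : Tset w = aff w ⁻¹' simplexSet w := by
  ext x
  exact mem_Tset_iff

lemma Tset_measurable (w : Equiv.Perm (Fin m)) : MeasurableSet (Tset w) := by
  rw [Tset_eq]
  exact (aff_measurePreserving w).measurable (simplexSet_measurable w)

lemma Tset_disjoint {w w' : Equiv.Perm (Fin m)} (h : w ≠ w') : Disjoint (Tset w) (Tset w') := by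
  rw [Set.disjoint_left]
  rintro x ⟨-, hx⟩ ⟨-, hx'⟩
  exact Set.disjoint_left.mp (simplex_disjoint h) hx hx'

lemma cube_diff_subset : cubeSet m \ Bx m ⊆ ⋃ w : Equiv.Perm (Fin m), Tset w := by
  rintro x ⟨hxc, hxb⟩
  obtain ⟨h01, hinj⟩ := claimA hxb
  obtain ⟨w, hw⟩ := exists_simplex_mem h01 hinj
  exact Set.mem_iUnion.mpr ⟨w, hxc, hw⟩

lemma psi_inter_T (S : Set (Fin m → ℝ)) (w : Equiv.Perm (Fin m)) :
    psifun ⁻¹' S ∩ Tset w = aff w ⁻¹' (S ∩ simplexSet w) := by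
  ext x
  constructor
  · rintro ⟨hxS, hxT⟩
    have heq := psi_eq_aff hxT.1 hxT.2
    refine ⟨?_, ?_⟩
    · rw [← heq]; exact hxS
    · rw [← heq]; exact hxT.2
  · rintro ⟨hxS, hxsim⟩
    have hxT : x ∈ Tset w := mem_Tset_iff.mpr hxsim
    have heq := psi_eq_aff hxT.1 hxT.2
    refine ⟨?_, hxT⟩
    show psifun x ∈ S
    rw [heq]
    exact hxS

lemma volume_Tset (w : Equiv.Perm (Fin m)) :
    (m.factorial : ENNReal) * volume (Tset w) = 1 := by
  rw [Tset_eq, (aff_measurePreserving w).measure_preimage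
    (simplexSet_measurable w).nullMeasurableSet]
  exact volume_simplex_norm w

lemma psi_injOn : Set.InjOn (psifun) (cubeSet m \ Bx m) := by
  rintro x ⟨hxc, hxb⟩ x' ⟨hxc', hxb'⟩ hpsi
  obtain ⟨h01, hinj⟩ := claimA hxb
  obtain ⟨h01', hinj'⟩ := claimA hxb'
  obtain ⟨w, hw⟩ := exists_simplex_mem h01 hinj
  obtain ⟨w', hw'⟩ := exists_simplex_mem h01' hinj'
  have hww' : w = w' := by
    by_contra hne
    rw [hpsi] at hw
    exact Set.disjoint_left.mp (simplex_disjoint hne) hw hw'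
  subst hww'
  have h1 := psi_eq_aff hxc hw
  have h2 := psi_eq_aff hxc' hw'
  apply aff_injective w
  rw [← h1, ← h2, hpsi]

lemma vol_inter_cube (S : Set (Fin m → ℝ)) (hS : MeasurableSet S) :
    volume (psifun ⁻¹' S ∩ cubeSet m) = volume (S ∩ cubeSet m) := by
  have step1 : volume (psifun ⁻¹' S ∩ cubeSet m)
      = volume (psifun ⁻¹' S ∩ ⋃ w : Equiv.Perm (Fin m), Tset w) := by
    apply le_antisymm
    · have hsub : psifun ⁻¹' S ∩ cubeSet m
          ⊆ (psifun ⁻¹' S ∩ ⋃ w : Equiv.Perm (Fin m), Tset w) ∪ Bx m := by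
        rintro x ⟨hxS, hxc⟩
        by_cases hb : x ∈ Bx m
        · exact Or.inr hb
        · exact Or.inl ⟨hxS, cube_diff_subset ⟨hxc, hb⟩⟩
      calc volume (psifun ⁻¹' S ∩ cubeSet m)
          ≤ volume ((psifun ⁻¹' S ∩ ⋃ w : Equiv.Perm (Fin m), Tset w) ∪ Bx m) :=
            measure_mono hsub
        _ ≤ volume (psifun ⁻¹' S ∩ ⋃ w : Equiv.Perm (Fin m), Tset w) + volume (Bx m) :=
            measure_union_le _ _
        _ = volume (psifun ⁻¹' S ∩ ⋃ w : Equiv.Perm (Fin m), Tset w) := by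
            rw [Bx_null, add_zero]
    · refine measure_mono (Set.inter_subset_inter_right _ ?_)
      exact Set.iUnion_subset fun w => fun x hx => hx.1
  have step2 : volume (psifun ⁻¹' S ∩ ⋃ w : Equiv.Perm (Fin m), Tset w)
      = ∑ w : Equiv.Perm (Fin m), volume (S ∩ simplexSet w) := by
    rw [Set.inter_iUnion]
    rw [measure_iUnion ?hd ?hm]
    case hd =>
      intro w w' hne
      exact Disjoint.mono (Set.inter_subset_right) (Set.inter_subset_right) (Tset_disjoint hne)
    case hm =>
      exact fun w => (psifun_measurable hS).inter (Tset_measurable w)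
    rw [tsum_fintype]
    refine Finset.sum_congr rfl fun w _ => ?_
    rw [psi_inter_T S w]
    exact (aff_measurePreserving w).measure_preimage
      (hS.inter (simplexSet_measurable w)).nullMeasurableSet
  have step3 : ∑ w : Equiv.Perm (Fin m), volume (S ∩ simplexSet w) = volume (S ∩ cubeSet m) := by
    rw [← tsum_fintype (L := SummationFilter.unconditional _), ← measure_iUnion ?hd ?hm, ← Set.inter_iUnion]
    case hd =>
      intro w w' hne
      exact Disjoint.mono (Set.inter_subset_right) (Set.inter_subset_right)
        (simplex_disjoint hne)
    case hm =>
      exact fun w => hS.inter (simplexSet_measurable w)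
    apply le_antisymm
    · refine measure_mono (Set.inter_subset_inter_right _ ?_)
      exact Set.iUnion_subset simplex_subset_cube
    · have hsub : S ∩ cubeSet m
          ⊆ (S ∩ ⋃ w : Equiv.Perm (Fin m), simplexSet w) ∪ By m := by
        rintro y ⟨hyS, hyc⟩
        by_cases hb : y ∈ By m
        · exact Or.inr hb
        · obtain ⟨w, hw⟩ := claimB hyc hb
          exact Or.inl ⟨hyS, Set.mem_iUnion.mpr ⟨w, hw⟩⟩
      calc volume (S ∩ cubeSet m)
          ≤ volume ((S ∩ ⋃ w : Equiv.Perm (Fin m), simplexSet w) ∪ By m) := measure_mono hsub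
        _ ≤ volume (S ∩ ⋃ w : Equiv.Perm (Fin m), simplexSet w) + volume (By m) :=
            measure_union_le _ _
        _ = volume (S ∩ ⋃ w : Equiv.Perm (Fin m), simplexSet w) := by rw [By_null, add_zero]
  rw [step1, step2, step3]

lemma psi_measurePreserving :
    MeasurePreserving (psifun) (volume.restrict (cubeSet m)) (volume.restrict (cubeSet m)) := by
  refine ⟨psifun_measurable, ?_⟩
  ext S hS
  rw [Measure.map_apply psifun_measurable hS, Measure.restrict_apply hS,
    Measure.restrict_apply (psifun_measurable hS)]
  exact vol_inter_cube S hS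


open Classical in
noncomputable def dcard (w : Equiv.Perm (Fin m)) : ℕ :=
  (Finset.univ.filter fun j : Fin m => dsc w j).card

open Classical in
lemma des_card (w : Equiv.Perm (Fin m)) : Nat.card {i : Fin m // dsc w i} = dcard w := by
  rw [Nat.card_eq_fintype_card, dcard, Fintype.card_subtype]

lemma sum_bounds (hm : 0 < m) {w : Equiv.Perm (Fin m)} {x : Fin m → ℝ} (hx : x ∈ Tset w) :
    ((dcard w : ℝ) < ∑ i, x i) ∧ (∑ i, x i < (dcard w : ℝ) + 1) := by
  set last : Fin m := ⟨m - 1, by omega⟩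
  have hlast : (last : ℕ) + 1 = m := by
    show m - 1 + 1 = m
    omega
  have hsum : ∑ i, x i = psum x last := (psum_last x hlast).symm
  have hfl : ⌊psum x last⌋ = cnt w last := floor_psum hx.1 hx.2 last
  have hcl : cnt w last = dcard w := cnt_last w hlast
  have hfr := simplex_pos hx.2 last
  have hfr1 : 0 < Int.fract (psum x last) := hfr.1
  have hfr2 : Int.fract (psum x last) < 1 := hfr.2
  rw [← Int.self_sub_floor] at hfr1 hfr2
  have hcast : ((⌊psum x last⌋ : ℤ) : ℝ) = (dcard w : ℝ) := by
    rw [hfl, hcl]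
    push_cast
    ring
  rw [hcast] at hfr1 hfr2
  constructor
  · rw [hsum]; linarith
  · rw [hsum]; linarith

lemma null_sum_eq (hm : 0 < m) (c : ℝ) : volume {x : Fin m → ℝ | ∑ i, x i = c} = 0 := by
  set last : Fin m := ⟨m - 1, by omega⟩
  have hlast : (last : ℕ) + 1 = m := by
    show m - 1 + 1 = m
    omega
  have : {x : Fin m → ℝ | ∑ i, x i = c} = {x | psum x last = c} := by
    ext x
    rw [Set.mem_setOf_eq, Set.mem_setOf_eq, psum_last x hlast]
  rw [this]
  exact null_psum_eq last c

end Stmt18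

open Stmt18 in
/-- Stanley's triangulation of the hypersimplex: the map
`ψ : [0,1]^{n-1} → [0,1]^{n-1}`, `ψ(x)_i = frac(x₁ + ⋯ + x_i)`, is volume preserving and
bijective outside a set of measure zero; for `w ∈ S_{n-1}` let
`∇_w = {y : 0 < y_{w(1)} < ⋯ < y_{w(n-1)} < 1}` and `T_w = cube ∩ ψ⁻¹(∇_w)`.  The pieces
`T_w` with `des(w⁻¹) = k - 1` are pairwise disjoint unit simplices (normalized volume `1`)
contained in the hypersimplex `Δ̃_{k,n} = {x ∈ [0,1]^{n-1} : k-1 ≤ ∑ x ≤ k}`, they cover it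
up to measure zero, and hence the normalized volume of `Δ̃_{k,n}` equals the Eulerian
number `A_{k,n-1}`, the number of `w ∈ S_{n-1}` with `k - 1` descents. -/
theorem stmt18 (n k : ℕ) (hn : 2 ≤ n) (hk1 : 1 ≤ k) (hkn : k ≤ n - 1) :
    let cube : Set (Fin (n - 1) → ℝ) := {x | ∀ i, 0 ≤ x i ∧ x i ≤ 1}
    let ψ : (Fin (n - 1) → ℝ) → (Fin (n - 1) → ℝ) :=
      fun x i => Int.fract (∑ j ∈ Finset.univ.filter (fun j : Fin (n - 1) => j ≤ i), x j)
    let simplex : Equiv.Perm (Fin (n - 1)) → Set (Fin (n - 1) → ℝ) := fun w =>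
      {y | (∀ i, 0 < y (w i) ∧ y (w i) < 1) ∧ ∀ i j : Fin (n - 1), i < j → y (w i) < y (w j)}
    let des : Equiv.Perm (Fin (n - 1)) → ℕ := fun w =>
      Nat.card {i : Fin (n - 1) // ∃ h : (i : ℕ) + 1 < n - 1, w⁻¹ ⟨(i : ℕ) + 1, h⟩ < w⁻¹ i}
    let T : Equiv.Perm (Fin (n - 1)) → Set (Fin (n - 1) → ℝ) := fun w => cube ∩ ψ ⁻¹' simplex w
    let Δ : Set (Fin (n - 1) → ℝ) := {x ∈ cube | (k : ℝ) - 1 ≤ ∑ i, x i ∧ ∑ i, x i ≤ k}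
    MeasurePreserving ψ (volume.restrict cube) (volume.restrict cube) ∧
    (∃ N : Set (Fin (n - 1) → ℝ), volume N = 0 ∧ Set.InjOn ψ (cube \ N)) ∧
    (∀ w, des w = k - 1 → T w ⊆ Δ) ∧
    (∀ w w', w ≠ w' → Disjoint (T w) (T w')) ∧
    (∀ w, des w = k - 1 → ((n - 1).factorial : ENNReal) * volume (T w) = 1) ∧
    volume (Δ \ ⋃ w ∈ {w | des w = k - 1}, T w) = 0 ∧
    ((n - 1).factorial : ENNReal) * volume Δ
      = (Nat.card {w : Equiv.Perm (Fin (n - 1)) // des w = k - 1} : ENNReal) := by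
  classical
  intro cube ψ simplex des T Δ
  have hm : 0 < n - 1 := by omega
  have hcube : cube = cubeSet (n - 1) := rfl
  have hpsi : ψ = (psifun : (Fin (n-1) → ℝ) → _) := rfl
  have hsimp : ∀ w, simplex w = simplexSet w := fun w => rfl
  have hT : ∀ w, T w = Tset w := fun w => rfl
  have hdes : ∀ w, des w = dcard w := fun w => des_card w
  -- part 3
  have part3 : ∀ w, des w = k - 1 → T w ⊆ Δ := by
    intro w hw x hx
    rw [hT w] at hx
    have hb := sum_bounds hm hx
    have hd : dcard w = k - 1 := by rw [← hdes w]; exact hw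
    have hcast : ((dcard w : ℕ) : ℝ) = (k : ℝ) - 1 := by
      rw [hd]
      push_cast [hk1]
      ring
    refine ⟨hx.1, ?_, ?_⟩
    · rw [← hcast]; exact hb.1.le
    · have : (dcard w : ℝ) + 1 = (k : ℝ) := by rw [hcast]; ring
      rw [← this]
      exact hb.2.le
  -- part 6
  have part6 : volume (Δ \ ⋃ w ∈ {w | des w = k - 1}, T w) = 0 := by
    refine measure_mono_null ?_ (measure_union_null (measure_union_null Bx_null
      (null_sum_eq hm ((k : ℝ) - 1))) (null_sum_eq hm (k : ℝ)))
    rintro x ⟨hxΔ, hxU⟩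
    by_cases hb : x ∈ Bx (n - 1)
    · exact Or.inl (Or.inl hb)
    · by_cases h1 : ∑ i, x i = (k : ℝ) - 1
      · exact Or.inl (Or.inr h1)
      by_cases h2 : ∑ i, x i = (k : ℝ)
      · exact Or.inr h2
      exfalso
      obtain ⟨hxc, hs1, hs2⟩ := hxΔ
      obtain ⟨w, hw⟩ := Set.mem_iUnion.mp (cube_diff_subset (m := n - 1) ⟨hxc, hb⟩)
      have hbnd := sum_bounds hm hw
      have hlt1 : (k : ℝ) - 1 < ∑ i, x i := lt_of_le_of_ne hs1 (Ne.symm h1)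
      have hlt2 : ∑ i, x i < (k : ℝ) := lt_of_le_of_ne hs2 h2
      have hdk : dcard w = k - 1 := by
        have c1 : (dcard w : ℝ) < (k : ℝ) := lt_trans hbnd.1 hlt2
        have c2 : (k : ℝ) - 1 < (dcard w : ℝ) + 1 := lt_trans hlt1 hbnd.2
        have c1' : dcard w < k := by exact_mod_cast c1
        have c2' : (k : ℝ) < (dcard w : ℝ) + 2 := by linarith
        have c2'' : k < dcard w + 2 := by exact_mod_cast c2'
        omega
      apply hxU
      have hdw : des w = k - 1 := by rw [hdes w, hdk]
      refine Set.mem_iUnion₂.mpr ⟨w, hdw, ?_⟩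
      rw [hT w]
      exact hw
  refine ⟨psi_measurePreserving, ⟨Bx (n-1), Bx_null, psi_injOn⟩, part3,
    fun w w' h => Tset_disjoint h, fun w _ => volume_Tset w, part6, ?_⟩
  -- part 7
  set F : Finset (Equiv.Perm (Fin (n - 1))) := Finset.univ.filter (fun w => des w = k - 1)
    with hF
  have hUeq : (⋃ w ∈ {w | des w = k - 1}, T w) = ⋃ w ∈ F, Tset w := by
    ext x
    simp only [Set.mem_iUnion, Set.mem_setOf_eq, Finset.mem_coe, hF, Finset.mem_filter,
      Finset.mem_univ, true_and, exists_prop]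
    constructor
    · rintro ⟨w, hw1, hw2⟩
      exact ⟨w, hw1, (hT w) ▸ hw2⟩
    · rintro ⟨w, hw1, hw2⟩
      exact ⟨w, hw1, (hT w) ▸ hw2⟩
  have hvolU : volume (⋃ w ∈ F, Tset w) = ∑ w ∈ F, volume (Tset w) := by
    refine measure_biUnion_finset ?_ fun w _ => Tset_measurable w
    intro w hw w' hw' hne
    exact Tset_disjoint hne
  have hvolΔ : volume Δ = ∑ w ∈ F, volume (Tset w) := by
    rw [← hvolU]
    apply le_antisymm
    · calc volume Δ ≤ volume ((⋃ w ∈ F, Tset w) ∪ (Δ \ ⋃ w ∈ {w | des w = k - 1}, T w)) := by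
            refine measure_mono ?_
            intro x hx
            by_cases hu : x ∈ ⋃ w ∈ {w | des w = k - 1}, T w
            · rw [hUeq] at hu
              exact Or.inl hu
            · exact Or.inr ⟨hx, hu⟩
        _ ≤ volume (⋃ w ∈ F, Tset w) + volume (Δ \ ⋃ w ∈ {w | des w = k - 1}, T w) :=
            measure_union_le _ _
        _ = volume (⋃ w ∈ F, Tset w) := by rw [part6, add_zero]
    · refine measure_mono ?_
      refine Set.iUnion₂_subset fun w hw => ?_
      have hw' : des w = k - 1 := (Finset.mem_filter.mp hw).2
      have := part3 w hw'
      rw [hT w] at this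
      exact this
  rw [hvolΔ, Finset.mul_sum]
  have hterm : ∀ w ∈ F, ((n-1).factorial : ENNReal) * volume (Tset w) = 1 :=
    fun w _ => volume_Tset w
  rw [Finset.sum_congr rfl hterm, Finset.sum_const, nsmul_eq_mul, mul_one]
  congr 1
  rw [Nat.card_eq_fintype_card, Fintype.card_subtype]
end
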